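/- arXiv:1410.1465 — 6 statements merged into one kernel-verified Lean document; each statement's English description precedes it below -/
import Mathlib

section
/- Let G be a matrix Lie group and suppose for every pair of solutions χ_t, χ̄_t of dχ/dt = f_{u_t}(χ) the left-invariant error η_t = χ_t^{-1} χ̄_t satisfies an autonomous equation dη/dt = g_{u_t}(η_t) depending only on η_t and u_t. Then necessarily f_{u}(ab) = f_u(a)b + a f_u(b) - a f_u(Id) b for all a, b ∈ G and all inputs u, and moreover g_u(η) = f_u(η) - f_u(Id)·η. -/
attribute [local instance] Matrix.normedAddCommGroup Matrix.normedSpace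

/-- The matrix value of an invertible matrix. -/
def uval {N : ℕ} (a : (Matrix (Fin N) (Fin N) ℝ)ˣ) : Matrix (Fin N) (Fin N) ℝ := a

lemma hasDerivAt_matrix {N : ℕ} {M : ℝ → Matrix (Fin N) (Fin N) ℝ}
    {M' : Matrix (Fin N) (Fin N) ℝ} {t : ℝ} :
    HasDerivAt M M' t ↔ ∀ i j, HasDerivAt (fun s => M s i j) (M' i j) t := by
  constructor
  · intro h i j
    exact hasDerivAt_pi.mp (hasDerivAt_pi.mp h i) j
  · intro h
    exact hasDerivAt_pi.mpr fun i => hasDerivAt_pi.mpr (h i)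

lemma HasDerivAt.matmul {N : ℕ} {c d : ℝ → Matrix (Fin N) (Fin N) ℝ}
    {c' d' : Matrix (Fin N) (Fin N) ℝ} {t : ℝ}
    (hc : HasDerivAt c c' t) (hd : HasDerivAt d d' t) :
    HasDerivAt (fun s => c s * d s) (c' * d t + c t * d') t := by
  rw [hasDerivAt_matrix] at hc hd ⊢
  intro i j
  have h : ∀ s, (c s * d s) i j = ∑ k, c s i k * d s k j := fun s => Matrix.mul_apply
  simp only [h]
  have : (c' * d t + c t * d') i j
      = ∑ k, (c' i k * d t k j + c t i k * d' k j) := by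
    simp [Matrix.add_apply, Matrix.mul_apply, Finset.sum_add_distrib]
  rw [this]
  exact HasDerivAt.fun_sum fun k _ => (hc i k).mul (hd k j)

/-- If, for every input `u` and every pair of solutions `χ, χ̄` of `dχ/dt = f_u(χ)`
on the group of invertible matrices, the left-invariant error `η = χ⁻¹ χ̄` satisfies
the autonomous equation `dη/dt = g_u(η)` (solutions through every initial point exist),
then `f_u(ab) = f_u(a)b + a f_u(b) - a f_u(Id) b` and `g_u(η) = f_u(η) - f_u(Id) η`. -/
theorem stmt2 {N : ℕ} {U : Type*}
    (f g : U → Matrix (Fin N) (Fin N) ℝ → Matrix (Fin N) (Fin N) ℝ)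
    (hexist : ∀ (u : U) (x : (Matrix (Fin N) (Fin N) ℝ)ˣ),
      ∃ χ : ℝ → (Matrix (Fin N) (Fin N) ℝ)ˣ, χ 0 = x ∧
        ∀ t, HasDerivAt (fun s => uval (χ s)) (f u (uval (χ t))) t)
    (hauto : ∀ (u : U) (χ χb : ℝ → (Matrix (Fin N) (Fin N) ℝ)ˣ),
      (∀ t, HasDerivAt (fun s => uval (χ s)) (f u (uval (χ t))) t) →
      (∀ t, HasDerivAt (fun s => uval (χb s)) (f u (uval (χb t))) t) →
      ∀ t, HasDerivAt (fun s => uval ((χ s)⁻¹ * χb s))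
        (g u (uval ((χ t)⁻¹ * χb t))) t) :
    (∀ (u : U) (a b : (Matrix (Fin N) (Fin N) ℝ)ˣ),
      f u (uval a * uval b)
        = f u (uval a) * uval b + uval a * f u (uval b) - uval a * f u 1 * uval b) ∧
    (∀ (u : U) (η : (Matrix (Fin N) (Fin N) ℝ)ˣ),
      g u (uval η) = f u (uval η) - f u 1 * uval η) := by
  have key : ∀ (u : U) (a b : (Matrix (Fin N) (Fin N) ℝ)ˣ),
      f u (uval a * uval b) = f u (uval a) * uval b + uval a * g u (uval b) := by
    intro u a b
    obtain ⟨χ, hχ0, hχ⟩ := hexist u a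
    obtain ⟨χb, hχb0, hχb⟩ := hexist u (a * b)
    have hη := hauto u χ χb hχ hχb 0
    have hprod := (hχ 0).matmul hη
    have heq : (fun s => uval (χ s) * uval ((χ s)⁻¹ * χb s)) = fun s => uval (χb s) := by
      funext s
      simp only [uval, ← Units.val_mul, mul_inv_cancel_left]
    rw [heq] at hprod
    have huniq := hprod.unique (hχb 0)
    rw [hχ0, hχb0] at huniq
    have hb : (a⁻¹ * (a * b)) = b := by group
    rw [hb] at huniq
    have hab : uval (a * b) = uval a * uval b := rfl
    rw [hab] at huniq
    exact huniq.symm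
  have hg : ∀ (u : U) (η : (Matrix (Fin N) (Fin N) ℝ)ˣ),
      g u (uval η) = f u (uval η) - f u 1 * uval η := by
    intro u η
    have h := key u 1 η
    have h1 : uval (1 : (Matrix (Fin N) (Fin N) ℝ)ˣ) = 1 := rfl
    rw [h1, one_mul, one_mul] at h
    rw [h]; abel
  refine ⟨fun u a b => ?_, hg⟩
  rw [key u a b, hg u b]
  noncomm_ring
end

section
/- Conversely, if f satisfies f_u(ab) = f_u(a)b + a f_u(b) - a f_u(Id) b for all a, b ∈ G and all u, then for any two solutions χ_t, χ̄_t of dχ/dt = f_{u_t}(χ), the left-invariant error η_t^L = χ_t^{-1} χ̄_t satisfies dη_t^L/dt = f_{u_t}(η_t^L) - f_{u_t}(Id)·η_t^L, and the right-invariant error η_t^R = χ̄_t χ_t^{-1} satisfies dη_t^R/dt = f_{u_t}(η_t^R) - η_t^R·f_{u_t}(Id). -/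
attribute [local instance] Matrix.normedAddCommGroup Matrix.normedSpace

namespace Stmt3Aux

variable {N : ℕ}

abbrev M (N : ℕ) := Matrix (Fin N) (Fin N) ℝ

lemma hasDerivAt_entry {A : ℝ → M N} {D : M N} {t : ℝ}
    (h : HasDerivAt A D t) (i j : Fin N) :
    HasDerivAt (fun s => A s i j) (D i j) t := by
  exact hasDerivAt_pi.1 (hasDerivAt_pi.1 h i) j

noncomputable def Bmul (N : ℕ) : M N →L[ℝ] M N →L[ℝ] M N :=
  LinearMap.toContinuousLinearMap
    ((LinearMap.toContinuousLinearMap :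
        (M N →ₗ[ℝ] M N) ≃ₗ[ℝ] (M N →L[ℝ] M N)).toLinearMap ∘ₗ LinearMap.mul ℝ (M N))

@[simp] lemma Bmul_apply (a b : M N) : Bmul N a b = a * b := by
  simp [Bmul]

lemma HasDerivAt.matmul {A B : ℝ → M N} {A' B' : M N} {t : ℝ}
    (hA : HasDerivAt A A' t) (hB : HasDerivAt B B' t) :
    HasDerivAt (fun s => A s * B s) (A' * B t + A t * B') t := by
  refine hasDerivAt_pi.2 fun i => hasDerivAt_pi.2 fun j => ?_
  simp only [Matrix.mul_apply, Matrix.add_apply]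
  have h1 : HasDerivAt (fun s => ∑ k, A s i k * B s k j)
      (∑ k, (A' i k * B t k j + A t i k * B' k j)) t :=
    HasDerivAt.fun_sum fun k _ => (hasDerivAt_entry hA i k).mul (hasDerivAt_entry hB k j)
  simpa [Finset.sum_add_distrib] using h1

lemma differentiableAt_det {A : ℝ → M N} {t : ℝ}
    (h : ∀ i j, DifferentiableAt ℝ (fun s => A s i j) t) :
    DifferentiableAt ℝ (fun s => (A s).det) t := by
  simp only [Matrix.det_apply, Units.smul_def, zsmul_eq_mul]
  refine DifferentiableAt.fun_sum fun σ _ => DifferentiableAt.const_mul ?_ _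
  exact DifferentiableAt.fun_finsetProd fun i _ => h (σ i) i

lemma differentiableAt_matrix {A : ℝ → M N} {t : ℝ}
    (h : ∀ i j, DifferentiableAt ℝ (fun s => A s i j) t) :
    DifferentiableAt ℝ A t := by
  exact differentiableAt_pi.2 fun i => differentiableAt_pi.2 fun j => h i j

lemma differentiableAt_inv_curve (χ : ℝ → (M N)ˣ) {D : M N} {t : ℝ}
    (h : HasDerivAt (fun s => (χ s : M N)) D t) :
    DifferentiableAt ℝ (fun s => ((χ s)⁻¹ : (M N)ˣ) : ℝ → M N) t := by
  have hent : ∀ i j, DifferentiableAt ℝ (fun s => (χ s : M N) i j) t :=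
    fun i j => (hasDerivAt_entry h i j).differentiableAt
  have heq : (fun s => (((χ s)⁻¹ : (M N)ˣ) : M N))
      = fun s => ((χ s : M N).det)⁻¹ • (χ s : M N).adjugate := by
    funext s
    rw [Matrix.coe_units_inv, Matrix.inv_def, Ring.inverse_eq_inv']
  rw [heq]
  refine DifferentiableAt.smul (DifferentiableAt.inv (differentiableAt_det hent) ?_) ?_
  · exact (Matrix.isUnit_iff_isUnit_det _).mp (χ t).isUnit |>.ne_zero
  · refine differentiableAt_matrix fun i j => ?_
    have : (fun s => (χ s : M N).adjugate i j)
        = fun s => ((χ s : M N).updateRow j (Pi.single i 1)).det := by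
      funext s; rw [Matrix.adjugate_apply]
    rw [this]
    refine differentiableAt_det fun k l => ?_
    by_cases hk : k = j
    · simp [hk, Matrix.updateRow_apply]
    · simpa [Matrix.updateRow_apply, hk] using hent k l

lemma hasDerivAt_inv_curve (χ : ℝ → (M N)ˣ) {D : M N} {t : ℝ}
    (h : HasDerivAt (fun s => (χ s : M N)) D t) :
    HasDerivAt (fun s => (((χ s)⁻¹ : (M N)ˣ) : M N))
      (-(((χ t)⁻¹ : (M N)ˣ) * D * ((χ t)⁻¹ : (M N)ˣ))) t := by
  obtain ⟨g', hg'⟩ := differentiableAt_inv_curve χ h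
  have hg : HasDerivAt (fun s => (((χ s)⁻¹ : (M N)ˣ) : M N)) (g' 1) t := hg'.hasDerivAt
  have hprod := HasDerivAt.matmul hg h
  have hconst : HasDerivAt (fun s => (((χ s)⁻¹ : (M N)ˣ) : M N) * (χ s : M N))
      (0 : M N) t := by
    have : (fun s => (((χ s)⁻¹ : (M N)ˣ) : M N) * (χ s : M N)) = fun _ => (1 : M N) := by
      funext s
      rw [← Units.val_mul]
      simp
    rw [this]
    exact hasDerivAt_const t 1
  have heq : g' 1 * (χ t : M N) + (((χ t)⁻¹ : (M N)ˣ) : M N) * D = 0 :=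
    hprod.unique hconst
  have hsolve : g' 1 = -(((χ t)⁻¹ : (M N)ˣ) * D * ((χ t)⁻¹ : (M N)ˣ)) := by
    have h2 : g' 1 * (χ t : M N) = -((((χ t)⁻¹ : (M N)ˣ) : M N) * D) :=
      eq_neg_of_add_eq_zero_left heq
    calc g' 1 = g' 1 * ((χ t : M N) * (((χ t)⁻¹ : (M N)ˣ) : M N)) := by
              rw [← Units.val_mul]; simp
      _ = (g' 1 * (χ t : M N)) * (((χ t)⁻¹ : (M N)ˣ) : M N) := by rw [mul_assoc]
      _ = -(((χ t)⁻¹ : (M N)ˣ) * D * ((χ t)⁻¹ : (M N)ˣ)) := by rw [h2]; noncomm_ring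
  rwa [hsolve] at hg

end Stmt3Aux

open Stmt3Aux in
/-- If `f_{u_t}` (here `f t` for the time-varying input signal `u_t`) is group-affine,
then for any two solutions `χ, χ̄` of `dχ/dt = f_{u_t}(χ)`, the left-invariant error
`η^L = χ⁻¹ χ̄` satisfies `dη^L/dt = f_{u_t}(η^L) - f_{u_t}(Id) η^L` and the
right-invariant error `η^R = χ̄ χ⁻¹` satisfies `dη^R/dt = f_{u_t}(η^R) - η^R f_{u_t}(Id)`. -/
theorem stmt3 {N : ℕ}
    (f : ℝ → Matrix (Fin N) (Fin N) ℝ → Matrix (Fin N) (Fin N) ℝ)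
    (hf : ∀ (t : ℝ) (a b : (Matrix (Fin N) (Fin N) ℝ)ˣ),
      f t (uval a * uval b)
        = f t (uval a) * uval b + uval a * f t (uval b) - uval a * f t 1 * uval b)
    (χ χb : ℝ → (Matrix (Fin N) (Fin N) ℝ)ˣ)
    (hχ : ∀ t, HasDerivAt (fun s => uval (χ s)) (f t (uval (χ t))) t)
    (hχb : ∀ t, HasDerivAt (fun s => uval (χb s)) (f t (uval (χb t))) t) :
    (∀ t, HasDerivAt (fun s => uval ((χ s)⁻¹ * χb s))
      (f t (uval ((χ t)⁻¹ * χb t)) - f t 1 * uval ((χ t)⁻¹ * χb t)) t) ∧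
    (∀ t, HasDerivAt (fun s => uval (χb s * (χ s)⁻¹))
      (f t (uval (χb t * (χ t)⁻¹)) - uval (χb t * (χ t)⁻¹) * f t 1) t) := by
  have huval : ∀ (a b : (Matrix (Fin N) (Fin N) ℝ)ˣ), uval (a * b) = uval a * uval b :=
    fun a b => rfl
  constructor
  · intro t
    have hinv : HasDerivAt (fun s => uval ((χ s)⁻¹))
        (-(uval ((χ t)⁻¹) * f t (uval (χ t)) * uval ((χ t)⁻¹))) t :=
      hasDerivAt_inv_curve χ (hχ t)
    have hmul := HasDerivAt.matmul hinv (hχb t)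
    set c := uval ((χ t)⁻¹) with hc
    set d := f t (uval (χ t)) with hd
    set e := uval (χb t) with he
    have hcancel : c * uval (χ t) = 1 := by
      rw [hc, ← huval]; simp [uval]
    have key := hf t (χ t) ((χ t)⁻¹ * χb t)
    rw [← huval, show χ t * ((χ t)⁻¹ * χb t) = χb t by group] at key
    have hη : uval ((χ t)⁻¹ * χb t) = c * e := rfl
    rw [hη, ← he, ← hd] at key
    -- key : f t e = d * (c * e) + uval (χ t) * f t (c * e) - uval (χ t) * f t 1 * (c * e)
    have key2 : c * f t e = c * d * c * e + f t (c * e) - f t 1 * (c * e) := by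
      rw [key]
      simp only [mul_sub, mul_add, ← mul_assoc, hcancel, one_mul]
    have hfun : (fun s => uval ((χ s)⁻¹ * χb s))
        = fun s => uval ((χ s)⁻¹) * uval (χb s) := rfl
    rw [hfun, hη]
    convert hmul using 1
    rw [key2]
    noncomm_ring
  · intro t
    have hinv : HasDerivAt (fun s => uval ((χ s)⁻¹))
        (-(uval ((χ t)⁻¹) * f t (uval (χ t)) * uval ((χ t)⁻¹))) t :=
      hasDerivAt_inv_curve χ (hχ t)
    have hmul := HasDerivAt.matmul (hχb t) hinv
    set c := uval ((χ t)⁻¹) with hc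
    set d := f t (uval (χ t)) with hd
    set e := uval (χb t) with he
    have hcancel : uval (χ t) * c = 1 := by
      rw [hc, ← huval]; simp [uval]
    have key := hf t (χb t * (χ t)⁻¹) (χ t)
    rw [← huval, show χb t * (χ t)⁻¹ * χ t = χb t by group] at key
    have hη : uval (χb t * (χ t)⁻¹) = e * c := rfl
    rw [hη, ← he, ← hd] at key
    -- key : f t e = f t (e * c) * uval (χ t) + (e * c) * d - (e * c) * f t 1 * uval (χ t)
    have key2 : f t e * c = f t (e * c) + e * c * d * c - e * c * f t 1 := by
      rw [key]
      simp only [sub_mul, add_mul, mul_assoc, hcancel, mul_one]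
    have hfun : (fun s => uval (χb s * (χ s)⁻¹))
        = fun s => uval (χb s) * uval ((χ s)⁻¹) := rfl
    rw [hfun, hη]
    convert hmul using 1
    rw [key2]
    noncomm_ring
end

section
/- Let g: G → ℝ^{N×N} be a time-dependent vector field satisfying g_t(ab) = a g_t(b) + g_t(a) b for all a, b ∈ G, and let Φ_t denote the associated flow. Then the flow is a group homomorphism for each time t: Φ_t(η₀ η₀') = Φ_t(η₀)·Φ_t(η₀') for all η₀, η₀' ∈ G. -/
attribute [local instance] Matrix.normedAddCommGroup Matrix.normedSpace

noncomputable def mulCLM (N : ℕ) :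
    Matrix (Fin N) (Fin N) ℝ →L[ℝ] Matrix (Fin N) (Fin N) ℝ →L[ℝ] Matrix (Fin N) (Fin N) ℝ :=
  LinearMap.toContinuousLinearMap
    { toFun := fun a => LinearMap.toContinuousLinearMap (LinearMap.mulLeft ℝ a)
      map_add' := by
        intro a b; ext x; simp [add_mul]
      map_smul' := by
        intro c a; ext x; simp [smul_mul_assoc] }

lemma mulCLM_apply {N : ℕ} (a b : Matrix (Fin N) (Fin N) ℝ) : mulCLM N a b = a * b := rfl

lemma hasDerivAt_mul {N : ℕ} {a b : ℝ → Matrix (Fin N) (Fin N) ℝ}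
    {a' b' : Matrix (Fin N) (Fin N) ℝ} {t : ℝ}
    (ha : HasDerivAt a a' t) (hb : HasDerivAt b b' t) :
    HasDerivAt (fun s => a s * b s) (a' * b t + a t * b') t := by
  have hB := (mulCLM N).isBoundedBilinearMap
  have := (hB.hasFDerivAt (a t, b t)).comp_hasDerivAt t (ha.prodMk hb)
  refine this.congr_deriv ?_
  rw [IsBoundedBilinearMap.deriv_apply, add_comm]
  rfl

/-- If `g_t(ab) = a g_t(b) + g_t(a) b`, then the flow `Φ_t` of `dη/dt = g_t(η)`
(existence and uniqueness of solutions assumed) is a group homomorphism: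
`Φ_t(η₀η₀') = Φ_t(η₀) Φ_t(η₀')`. -/
theorem stmt6 {N : ℕ}
    (g : ℝ → Matrix (Fin N) (Fin N) ℝ → Matrix (Fin N) (Fin N) ℝ)
    (hg : ∀ (t : ℝ) (a b : (Matrix (Fin N) (Fin N) ℝ)ˣ),
      g t (uval a * uval b) = uval a * g t (uval b) + g t (uval a) * uval b)
    (Φ : ℝ → (Matrix (Fin N) (Fin N) ℝ)ˣ → (Matrix (Fin N) (Fin N) ℝ)ˣ)
    (hΦ0 : ∀ η0, Φ 0 η0 = η0)
    (hΦ : ∀ η0 t, HasDerivAt (fun s => uval (Φ s η0)) (g t (uval (Φ t η0))) t)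
    (huniq : ∀ η : ℝ → (Matrix (Fin N) (Fin N) ℝ)ˣ,
      (∀ t, HasDerivAt (fun s => uval (η s)) (g t (uval (η t))) t) →
      ∀ t, η t = Φ t (η 0)) :
    ∀ (t : ℝ) (η0 η0' : (Matrix (Fin N) (Fin N) ℝ)ˣ),
      Φ t (η0 * η0') = Φ t η0 * Φ t η0' := by
  intro t η0 η0'
  have key := huniq (fun s => Φ s η0 * Φ s η0') ?_ t
  · simp only [hΦ0] at key
    exact key.symm
  · intro s
    have h1 := hΦ η0 s
    have h2 := hΦ η0' s
    have hprod := hasDerivAt_mul h1 h2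
    have huv : (fun u : ℝ => uval (Φ u η0) * uval (Φ u η0')) =
        (fun u : ℝ => uval ((fun r => Φ r η0 * Φ r η0') u)) := by
      funext u; simp [uval]
    rw [huv] at hprod
    convert hprod using 1
    have : uval ((fun r => Φ r η0 * Φ r η0') s) = uval (Φ s η0) * uval (Φ s η0') := by
      simp [uval]
    rw [this, hg s (Φ s η0) (Φ s η0'), add_comm]
end

section
/- (Log-linear property of the error) Let g_t satisfy g_t(ab) = a g_t(b) + g_t(a) b on a matrix Lie group G with exponential map exp: ℝ^{dim 𝔤} → G, and let A_t be the matrix defined by the first-order expansion g_t(exp(ξ)) = L_𝔤(A_t ξ) + O(‖ξ‖²). If ξ_t solves the linear ODE dξ_t/dt = A_t ξ_t and η_t solves the nonlinear ODE dη_t/dt = g_t(η_t) with η_0 = exp(ξ_0), then η_t = exp(ξ_t) for all t ≥ 0, for arbitrarily large ξ_0. -/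
set_option linter.unusedSectionVars false
set_option linter.unusedTactic false
set_option linter.unreachableTactic false
set_option maxHeartbeats 1000000

section AuxDev

open Filter NormedSpace Finset Asymptotics

section Generic
variable {𝔸 : Type*} [NormedRing 𝔸] [NormedAlgebra ℝ 𝔸] [CompleteSpace 𝔸] [NormOneClass 𝔸]

/-- The "directional derivative of exp" series. -/
noncomputable def dD (X Y : 𝔸) : 𝔸 :=
  ∑' n : ℕ, (n.factorial⁻¹ : ℝ) • ∑ k ∈ Finset.range n, X ^ k * Y * X ^ (n - 1 - k)

lemma norm_triple (a b c : 𝔸) : ‖a * b * c‖ ≤ ‖a‖ * ‖b‖ * ‖c‖ :=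
  (norm_mul_le _ _).trans (mul_le_mul_of_nonneg_right (norm_mul_le a b) (norm_nonneg c))

lemma geom_pow_sub (B X : 𝔸) (n : ℕ) :
    B ^ n - X ^ n = ∑ k ∈ Finset.range n, B ^ k * (B - X) * X ^ (n - 1 - k) := by
  induction n with
  | zero => simp
  | succ n ih =>
    rw [Finset.sum_range_succ]
    have h1 : ∀ k ∈ Finset.range n, B ^ k * (B - X) * X ^ (n + 1 - 1 - k)
        = (B ^ k * (B - X) * X ^ (n - 1 - k)) * X := by
      intro k hk
      rw [Finset.mem_range] at hk
      have he : n + 1 - 1 - k = (n - 1 - k) + 1 := by omega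
      rw [he, pow_succ, ← mul_assoc]
    rw [Finset.sum_congr rfl h1, ← Finset.sum_mul, ← ih]
    have h2 : n + 1 - 1 - n = 0 := by omega
    rw [h2, pow_zero, mul_one, pow_succ, pow_succ]
    noncomm_ring

lemma nat_le_two_pow (n : ℕ) : (n : ℝ) ≤ 2 ^ n := le_of_lt (by exact_mod_cast Nat.lt_two_pow_self)

lemma termBound (X Y : 𝔸) (n : ℕ) :
    ‖(n.factorial⁻¹ : ℝ) • ∑ k ∈ Finset.range n, X ^ k * Y * X ^ (n - 1 - k)‖
      ≤ ‖Y‖ * ((2 * (‖X‖ + 1)) ^ n / n.factorial) := by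
  have hXM : ‖X‖ ≤ ‖X‖ + 1 := by linarith
  have hM1 : (1:ℝ) ≤ ‖X‖ + 1 := by linarith [norm_nonneg X]
  have hsum : ‖∑ k ∈ Finset.range n, X ^ k * Y * X ^ (n - 1 - k)‖
      ≤ n * ((‖X‖+1) ^ n * ‖Y‖) := by
    calc ‖∑ k ∈ Finset.range n, X ^ k * Y * X ^ (n - 1 - k)‖
        ≤ ∑ k ∈ Finset.range n, ‖X ^ k * Y * X ^ (n - 1 - k)‖ := norm_sum_le _ _
      _ ≤ ∑ k ∈ Finset.range n, (‖X‖+1) ^ n * ‖Y‖ := by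
          apply Finset.sum_le_sum
          intro k hk
          rw [Finset.mem_range] at hk
          calc ‖X ^ k * Y * X ^ (n - 1 - k)‖ ≤ ‖X ^ k‖ * ‖Y‖ * ‖X ^ (n-1-k)‖ := norm_triple _ _ _
            _ ≤ ‖X‖ ^ k * ‖Y‖ * ‖X‖ ^ (n-1-k) := by
                gcongr <;> [exact norm_pow_le X k; exact norm_pow_le X (n-1-k)]
            _ = ‖X‖ ^ (n - 1) * ‖Y‖ := by
                rw [mul_comm (‖X‖^k) ‖Y‖, mul_assoc, ← pow_add]
                rw [mul_comm ‖Y‖ _]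
                congr 2
                omega
            _ ≤ (‖X‖+1) ^ n * ‖Y‖ := by
                gcongr
                calc ‖X‖ ^ (n-1) ≤ (‖X‖+1) ^ (n-1) := by gcongr
                  _ ≤ (‖X‖+1) ^ n := pow_le_pow_right₀ hM1 (by omega)
      _ = n * ((‖X‖+1) ^ n * ‖Y‖) := by rw [Finset.sum_const, Finset.card_range, nsmul_eq_mul]
  rw [norm_smul, Real.norm_eq_abs, abs_of_nonneg (by positivity)]
  calc (n.factorial : ℝ)⁻¹ * ‖∑ k ∈ Finset.range n, X ^ k * Y * X ^ (n - 1 - k)‖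
      ≤ (n.factorial : ℝ)⁻¹ * (n * ((‖X‖+1) ^ n * ‖Y‖)) := by
        gcongr
    _ ≤ (n.factorial : ℝ)⁻¹ * (2 ^ n * ((‖X‖+1) ^ n * ‖Y‖)) := by
        apply mul_le_mul_of_nonneg_left _ (by positivity)
        exact mul_le_mul_of_nonneg_right (nat_le_two_pow n) (by positivity)
    _ = ‖Y‖ * ((2 * (‖X‖ + 1)) ^ n / n.factorial) := by
        rw [mul_pow]; field_simp

lemma summable_expAux (c : ℝ) (y : ℝ) : Summable (fun n : ℕ => y * (c ^ n / n.factorial)) :=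
  (Real.summable_pow_div_factorial c).mul_left y

lemma real_exp_tsum (c : ℝ) : ∑' n : ℕ, c ^ n / n.factorial = Real.exp c := by
  rw [Real.exp_eq_exp_ℝ, exp_eq_tsum_div]

lemma dD_summable (X Y : 𝔸) :
    Summable (fun n : ℕ => (n.factorial⁻¹ : ℝ) • ∑ k ∈ Finset.range n, X ^ k * Y * X ^ (n - 1 - k)) :=
  Summable.of_norm_bounded (summable_expAux (2*(‖X‖+1)) ‖Y‖) (termBound X Y)

lemma dD_norm_le (X Y : 𝔸) : ‖dD X Y‖ ≤ ‖Y‖ * Real.exp (2 * (‖X‖ + 1)) := by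
  have h1 : ‖dD X Y‖ ≤ ∑' n : ℕ, ‖Y‖ * ((2 * (‖X‖ + 1)) ^ n / n.factorial) := by
    refine (norm_tsum_le_tsum_norm ?_).trans ?_
    · exact ((summable_expAux (2*(‖X‖+1)) ‖Y‖).of_nonneg_of_le (fun n => norm_nonneg _) (termBound X Y))
    · exact Summable.tsum_le_tsum (termBound X Y)
        ((summable_expAux (2*(‖X‖+1)) ‖Y‖).of_nonneg_of_le (fun n => norm_nonneg _) (termBound X Y))
        (summable_expAux (2*(‖X‖+1)) ‖Y‖)
  rwa [tsum_mul_left, real_exp_tsum] at h1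


lemma dD_add (X Y Z : 𝔸) : dD X (Y + Z) = dD X Y + dD X Z := by
  unfold dD
  rw [← Summable.tsum_add (dD_summable X Y) (dD_summable X Z)]
  congr 1
  funext n
  rw [← smul_add, ← Finset.sum_add_distrib]
  congr 1
  apply Finset.sum_congr rfl
  intro k _
  rw [mul_add, add_mul]

lemma dD_smul (X : 𝔸) (r : ℝ) (Y : 𝔸) : dD X (r • Y) = r • dD X Y := by
  unfold dD
  rw [← ((dD_summable X Y).hasSum.const_smul r).tsum_eq]
  congr 1
  funext n
  have hinner : ∑ k ∈ Finset.range n, X ^ k * (r • Y) * X ^ (n - 1 - k)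
      = r • ∑ k ∈ Finset.range n, X ^ k * Y * X ^ (n - 1 - k) := by
    rw [Finset.smul_sum]
    apply Finset.sum_congr rfl
    intro k _
    rw [mul_smul_comm, smul_mul_assoc]
  rw [hinner, smul_comm]

lemma dD_sub (X Y Z : 𝔸) : dD X (Y - Z) = dD X Y - dD X Z := by
  have h := dD_add X (Y - Z) Z
  rw [sub_add_cancel] at h
  rw [h]; abel

lemma norm_exp_le (X : 𝔸) : ‖exp X‖ ≤ Real.exp ‖X‖ := by
  rw [exp_eq_tsum ℝ]
  refine (norm_tsum_le_tsum_norm (norm_expSeries_summable' (𝕂 := ℝ) X)).trans ?_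
  rw [← real_exp_tsum]
  apply Summable.tsum_le_tsum _ (norm_expSeries_summable' (𝕂 := ℝ) X) (Real.summable_pow_div_factorial ‖X‖)
  intro n
  rw [norm_smul, Real.norm_eq_abs, abs_of_nonneg (by positivity), div_eq_inv_mul]
  exact mul_le_mul_of_nonneg_left (norm_pow_le X n) (by positivity)

lemma dD_quad (X B : 𝔸) (h : ‖B - X‖ ≤ 1) :
    ‖exp B - exp X - dD X (B - X)‖ ≤ Real.exp (4 * (‖X‖ + 1)) * ‖B - X‖ ^ 2 := by
  set M := ‖X‖ + 1 with hMdef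
  have hM1 : (1:ℝ) ≤ M := by have := norm_nonneg X; linarith
  have hXM : ‖X‖ ≤ M := by linarith
  have hBM : ‖B‖ ≤ M := by
    have : ‖B‖ ≤ ‖X‖ + ‖B - X‖ := by
      calc ‖B‖ = ‖X + (B - X)‖ := by rw [add_sub_cancel]
        _ ≤ ‖X‖ + ‖B - X‖ := norm_add_le _ _
    linarith
  -- the series representation
  have hrep : exp B - exp X - dD X (B - X)
      = ∑' n : ℕ, (n.factorial⁻¹ : ℝ) •
          ∑ k ∈ Finset.range n, (B ^ k - X ^ k) * (B - X) * X ^ (n - 1 - k) := by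
    rw [exp_eq_tsum ℝ]
    unfold dD
    rw [← Summable.tsum_sub (expSeries_summable' (𝕂 := ℝ) B) (expSeries_summable' (𝕂 := ℝ) X),
        ← Summable.tsum_sub (Summable.sub (expSeries_summable' (𝕂 := ℝ) B) (expSeries_summable' (𝕂 := ℝ) X))
          (dD_summable X (B - X))]
    congr 1
    funext n
    rw [← smul_sub, ← smul_sub]
    congr 1
    rw [geom_pow_sub, ← Finset.sum_sub_distrib]
    apply Finset.sum_congr rfl
    intro k _
    rw [sub_mul, sub_mul]
  rw [hrep]
  have hbound : ∀ n : ℕ, ‖(n.factorial⁻¹ : ℝ) •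
      ∑ k ∈ Finset.range n, (B ^ k - X ^ k) * (B - X) * X ^ (n - 1 - k)‖
      ≤ ‖B - X‖ ^ 2 * ((4 * M) ^ n / n.factorial) := by
    intro n
    have hpow : ∀ k, k < n → ‖B ^ k - X ^ k‖ ≤ k * M ^ k * ‖B - X‖ := by
      intro k _
      rw [geom_pow_sub]
      calc ‖∑ j ∈ Finset.range k, B ^ j * (B - X) * X ^ (k - 1 - j)‖
          ≤ ∑ j ∈ Finset.range k, ‖B ^ j * (B - X) * X ^ (k - 1 - j)‖ := norm_sum_le _ _
        _ ≤ ∑ j ∈ Finset.range k, M ^ k * ‖B - X‖ := by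
            apply Finset.sum_le_sum
            intro j hj
            rw [Finset.mem_range] at hj
            calc ‖B ^ j * (B - X) * X ^ (k - 1 - j)‖
                ≤ ‖B ^ j‖ * ‖B - X‖ * ‖X ^ (k-1-j)‖ := norm_triple _ _ _
              _ ≤ M ^ j * ‖B - X‖ * M ^ (k-1-j) := by
                  gcongr
                  · exact (norm_pow_le B j).trans (by gcongr <;> exact hBM)
                  · exact (norm_pow_le X _).trans (by gcongr)
              _ = M ^ (j + (k-1-j)) * ‖B - X‖ := by rw [pow_add]; ring
              _ ≤ M ^ k * ‖B - X‖ := by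
                  gcongr
                  all_goals first | exact hM1 | omega
        _ = k * M ^ k * ‖B - X‖ := by
            rw [Finset.sum_const, Finset.card_range, nsmul_eq_mul]; ring
    have hterm : ‖∑ k ∈ Finset.range n, (B ^ k - X ^ k) * (B - X) * X ^ (n - 1 - k)‖
        ≤ n * (n * (M ^ n * ‖B - X‖ ^ 2)) := by
      calc ‖∑ k ∈ Finset.range n, (B ^ k - X ^ k) * (B - X) * X ^ (n - 1 - k)‖
          ≤ ∑ k ∈ Finset.range n, ‖(B ^ k - X ^ k) * (B - X) * X ^ (n - 1 - k)‖ :=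
            norm_sum_le _ _
        _ ≤ ∑ k ∈ Finset.range n, n * (M ^ n * ‖B - X‖ ^ 2) := by
            apply Finset.sum_le_sum
            intro k hk
            rw [Finset.mem_range] at hk
            calc ‖(B ^ k - X ^ k) * (B - X) * X ^ (n - 1 - k)‖
                ≤ ‖B ^ k - X ^ k‖ * ‖B - X‖ * ‖X ^ (n-1-k)‖ := norm_triple _ _ _
              _ ≤ (k * M ^ k * ‖B - X‖) * ‖B - X‖ * M ^ (n-1-k) := by
                  gcongr
                  · exact hpow k hk
                  · exact (norm_pow_le X _).trans (by gcongr)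
              _ = k * (M ^ (k + (n-1-k)) * ‖B - X‖ ^ 2) := by rw [pow_add]; ring
              _ ≤ n * (M ^ n * ‖B - X‖ ^ 2) := by
                  gcongr
                  all_goals first | exact hM1 | omega | exact_mod_cast Nat.le_of_lt hk
        _ = n * (n * (M ^ n * ‖B - X‖ ^ 2)) := by
            rw [Finset.sum_const, Finset.card_range, nsmul_eq_mul]
    rw [norm_smul, Real.norm_eq_abs, abs_of_nonneg (by positivity)]
    calc (n.factorial : ℝ)⁻¹ * ‖∑ k ∈ Finset.range n, (B ^ k - X ^ k) * (B - X) * X ^ (n - 1 - k)‖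
        ≤ (n.factorial : ℝ)⁻¹ * (n * (n * (M ^ n * ‖B - X‖ ^ 2))) := by gcongr
      _ ≤ (n.factorial : ℝ)⁻¹ * (2 ^ n * (2 ^ n * (M ^ n * ‖B - X‖ ^ 2))) := by
          apply mul_le_mul_of_nonneg_left _ (by positivity)
          have h2 := nat_le_two_pow n
          have heq1 : (n:ℝ) * (n * (M ^ n * ‖B - X‖ ^ 2)) = ((n:ℝ) * n) * (M ^ n * ‖B - X‖ ^ 2) := by ring
          have heq2 : (2:ℝ) ^ n * (2 ^ n * (M ^ n * ‖B - X‖ ^ 2)) = ((2:ℝ) ^ n * 2 ^ n) * (M ^ n * ‖B - X‖ ^ 2) := by ring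
          rw [heq1, heq2]
          apply mul_le_mul_of_nonneg_right _ (by positivity)
          exact mul_le_mul h2 h2 (by positivity) (by positivity)
      _ = ‖B - X‖ ^ 2 * ((4 * M) ^ n / n.factorial) := by
          rw [show (4:ℝ) * M = 2 * (2 * M) by ring, mul_pow, mul_pow]
          field_simp
  have hsummable : Summable (fun n : ℕ => ‖B - X‖ ^ 2 * ((4 * M) ^ n / n.factorial)) :=
    summable_expAux _ _
  calc ‖∑' n : ℕ, (n.factorial⁻¹ : ℝ) •
      ∑ k ∈ Finset.range n, (B ^ k - X ^ k) * (B - X) * X ^ (n - 1 - k)‖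
      ≤ ∑' n : ℕ, ‖B - X‖ ^ 2 * ((4 * M) ^ n / n.factorial) := by
        refine (norm_tsum_le_tsum_norm (hsummable.of_nonneg_of_le (fun n => norm_nonneg _) hbound)).trans ?_
        exact Summable.tsum_le_tsum hbound (hsummable.of_nonneg_of_le (fun n => norm_nonneg _) hbound) hsummable
    _ = Real.exp (4 * (‖X‖ + 1)) * ‖B - X‖ ^ 2 := by
        rw [tsum_mul_left, real_exp_tsum, hMdef]; ring


lemma innerSumBound (X Y : 𝔸) (n : ℕ) :
    ‖∑ k ∈ Finset.range n, X ^ k * Y * X ^ (n - 1 - k)‖ ≤ n * (‖X‖ ^ (n-1) * ‖Y‖) := by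
  calc ‖∑ k ∈ Finset.range n, X ^ k * Y * X ^ (n - 1 - k)‖
      ≤ ∑ k ∈ Finset.range n, ‖X ^ k * Y * X ^ (n - 1 - k)‖ := norm_sum_le _ _
    _ ≤ ∑ k ∈ Finset.range n, ‖X‖ ^ (n-1) * ‖Y‖ := by
        apply Finset.sum_le_sum
        intro k hk
        rw [Finset.mem_range] at hk
        calc ‖X ^ k * Y * X ^ (n - 1 - k)‖ ≤ ‖X ^ k‖ * ‖Y‖ * ‖X ^ (n-1-k)‖ := norm_triple _ _ _
          _ ≤ ‖X‖ ^ k * ‖Y‖ * ‖X‖ ^ (n-1-k) := by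
              gcongr <;> [exact norm_pow_le X k; exact norm_pow_le X (n-1-k)]
          _ = ‖X‖ ^ (n - 1) * ‖Y‖ := by
              rw [mul_comm (‖X‖^k) ‖Y‖, mul_assoc, ← pow_add, mul_comm ‖Y‖ _]
              congr 2
              omega
    _ = n * (‖X‖ ^ (n-1) * ‖Y‖) := by rw [Finset.sum_const, Finset.card_range, nsmul_eq_mul]

lemma dD_sub_self (X Y : 𝔸) : ‖dD X Y - Y‖ ≤ ‖X‖ * ‖Y‖ * Real.exp (2 * (‖X‖ + 1)) := by
  have hM1 : (1:ℝ) ≤ ‖X‖ + 1 := by linarith [norm_nonneg X]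
  have hrep : dD X Y - Y = ∑' n : ℕ,
      ((n.factorial⁻¹ : ℝ) • ∑ k ∈ Finset.range n, X ^ k * Y * X ^ (n - 1 - k)
        - if n = 1 then Y else 0) := by
    unfold dD
    rw [Summable.tsum_sub (dD_summable X Y) (hasSum_ite_eq 1 Y).summable, tsum_ite_eq]
  rw [hrep]
  have hbnd : ∀ n : ℕ, ‖(n.factorial⁻¹ : ℝ) • ∑ k ∈ Finset.range n, X ^ k * Y * X ^ (n - 1 - k)
        - if n = 1 then Y else 0‖ ≤ ‖X‖ * ‖Y‖ * ((2 * (‖X‖ + 1)) ^ n / n.factorial) := by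
    intro n
    match n with
    | 0 => simp; positivity
    | 1 =>
      have : ∑ k ∈ Finset.range 1, X ^ k * Y * X ^ (1 - 1 - k) = Y := by
        rw [Finset.sum_range_one]
        simp
      rw [this]
      simp
      positivity
    | (m+2) =>
      rw [if_neg (by omega), sub_zero, norm_smul, Real.norm_eq_abs, abs_of_nonneg (by positivity)]
      set n := m + 2 with hndef
      calc ((n.factorial : ℝ))⁻¹ * ‖∑ k ∈ Finset.range n, X ^ k * Y * X ^ (n - 1 - k)‖
          ≤ (n.factorial : ℝ)⁻¹ * (n * (‖X‖ ^ (n-1) * ‖Y‖)) := by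
            gcongr
            exact innerSumBound X Y n
        _ ≤ ‖X‖ * ‖Y‖ * ((2 * (‖X‖ + 1)) ^ n / n.factorial) := by
            have h1 : ‖X‖ ^ (n-1) ≤ ‖X‖ * (‖X‖+1) ^ n := by
              have : n - 1 = m + 1 := by omega
              rw [this, pow_succ']
              apply mul_le_mul_of_nonneg_left _ (norm_nonneg X)
              calc ‖X‖ ^ m ≤ (‖X‖+1) ^ m := by gcongr; linarith [norm_nonneg X]
                _ ≤ (‖X‖+1) ^ n := pow_le_pow_right₀ hM1 (by omega)
            have h2 : (n:ℝ) ≤ 2 ^ n := nat_le_two_pow n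
            have key : (n:ℝ) * (‖X‖ ^ (n-1) * ‖Y‖) ≤ (2:ℝ)^n * (‖X‖ * (‖X‖+1)^n * ‖Y‖) := by
              have := mul_le_mul h2 (mul_le_mul_of_nonneg_right h1 (norm_nonneg Y))
                (by positivity) (by positivity)
              calc (n:ℝ) * (‖X‖ ^ (n-1) * ‖Y‖) = (n:ℝ) * (‖X‖^(n-1) * ‖Y‖) := rfl
                _ ≤ (2:ℝ)^n * (‖X‖ * (‖X‖+1)^n * ‖Y‖) := this
            calc (n.factorial : ℝ)⁻¹ * ((n:ℝ) * (‖X‖ ^ (n-1) * ‖Y‖))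
                ≤ (n.factorial : ℝ)⁻¹ * ((2:ℝ)^n * (‖X‖ * (‖X‖+1)^n * ‖Y‖)) := by
                  apply mul_le_mul_of_nonneg_left key (by positivity)
              _ = ‖X‖ * ‖Y‖ * ((2 * (‖X‖ + 1)) ^ n / n.factorial) := by
                  rw [mul_pow]
                  field_simp
  have hsummable : Summable (fun n : ℕ => ‖X‖ * ‖Y‖ * ((2 * (‖X‖+1)) ^ n / n.factorial)) :=
    summable_expAux _ _
  calc ‖∑' n : ℕ, ((n.factorial⁻¹ : ℝ) • ∑ k ∈ Finset.range n, X ^ k * Y * X ^ (n - 1 - k)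
        - if n = 1 then Y else 0)‖
      ≤ ∑' n : ℕ, ‖X‖ * ‖Y‖ * ((2 * (‖X‖+1)) ^ n / n.factorial) := by
        refine (norm_tsum_le_tsum_norm (hsummable.of_nonneg_of_le (fun n => norm_nonneg _) hbnd)).trans ?_
        exact Summable.tsum_le_tsum hbnd (hsummable.of_nonneg_of_le (fun n => norm_nonneg _) hbnd) hsummable
    _ = ‖X‖ * ‖Y‖ * Real.exp (2 * (‖X‖ + 1)) := by rw [tsum_mul_left, real_exp_tsum]

lemma dD_hasDerivAt {c : ℝ → 𝔸} {c' : 𝔸} {t : ℝ} (hc : HasDerivAt c c' t) :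
    HasDerivAt (fun s => exp (c s)) (dD (c t) c') t := by
  rw [hasDerivAt_iff_isLittleO]
  have hO : (fun s => c s - c t) =O[nhds t] (fun s => s - t) := hc.isBigO_sub
  have hcont : Filter.Tendsto c (nhds t) (nhds (c t)) := hc.continuousAt
  have hev : ∀ᶠ s in nhds t, ‖c s - c t‖ ≤ 1 := by
    have h1 := hcont (Metric.closedBall_mem_nhds (c t) one_pos)
    filter_upwards [h1] with s hs
    rw [Set.mem_preimage, Metric.mem_closedBall, dist_eq_norm] at hs
    exact hs
  have hnorm0 : Filter.Tendsto (fun s => ‖c s - c t‖) (nhds t) (nhds 0) := by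
    have h1 : Filter.Tendsto (fun s => c s - c t) (nhds t) (nhds 0) := by
      simpa using hcont.sub (tendsto_const_nhds (x := c t))
    simpa using h1.norm
  have part1 : (fun s => exp (c s) - exp (c t) - dD (c t) (c s - c t))
      =o[nhds t] (fun s => s - t) := by
    have hbig : (fun s => exp (c s) - exp (c t) - dD (c t) (c s - c t))
        =O[nhds t] (fun s => ‖c s - c t‖ * ‖c s - c t‖) := by
      rw [Asymptotics.isBigO_iff]
      refine ⟨Real.exp (4 * (‖c t‖ + 1)), ?_⟩
      filter_upwards [hev] with s hs
      have hq := dD_quad (c t) (c s) hs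
      rw [Real.norm_eq_abs, abs_of_nonneg (mul_self_nonneg _)]
      calc ‖exp (c s) - exp (c t) - dD (c t) (c s - c t)‖
          ≤ Real.exp (4*(‖c t‖+1)) * ‖c s - c t‖^2 := hq
        _ = Real.exp (4*(‖c t‖+1)) * (‖c s - c t‖ * ‖c s - c t‖) := by ring
    have hlittle : (fun s => ‖c s - c t‖ * ‖c s - c t‖) =o[nhds t] (fun s => s - t) := by
      have h1 : (fun s => ‖c s - c t‖) =o[nhds t] (fun _ => (1:ℝ)) :=
        (Asymptotics.isLittleO_one_iff ℝ).mpr hnorm0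
      have h2 := h1.mul_isBigO hO.norm_left
      simpa using h2
    exact hbig.trans_isLittleO hlittle
  have part2 : (fun s => dD (c t) (c s - c t - (s - t) • c')) =o[nhds t] (fun s => s - t) := by
    have herr : (fun s => c s - c t - (s - t) • c') =o[nhds t] (fun s => s - t) :=
      hasDerivAt_iff_isLittleO.mp hc
    have hbig2 : (fun s => dD (c t) (c s - c t - (s - t) • c'))
        =O[nhds t] (fun s => c s - c t - (s - t) • c') := by
      rw [Asymptotics.isBigO_iff]
      refine ⟨Real.exp (2 * (‖c t‖ + 1)), Filter.Eventually.of_forall fun s => ?_⟩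
      have := dD_norm_le (c t) (c s - c t - (s - t) • c')
      rw [mul_comm] at this
      simpa using this
    exact hbig2.trans_isLittleO herr
  have hsum := part1.add part2
  refine hsum.congr (fun s => ?_) (fun s => rfl)
  rw [show dD (c t) (c s - c t - (s - t) • c') = dD (c t) (c s - c t) - (s - t) • dD (c t) c' from
    by rw [dD_sub, dD_smul]]
  abel

lemma hasDerivAt_pow_comp {f : ℝ → 𝔸} {f' : 𝔸} {t : ℝ} (hf : HasDerivAt f f' t) (n : ℕ) :
    HasDerivAt (fun s => f s ^ n)
      (∑ k ∈ Finset.range n, f t ^ k * f' * f t ^ (n - 1 - k)) t := by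
  induction n with
  | zero => simpa using hasDerivAt_const t (1:𝔸)
  | succ n ih =>
    have h := ih.mul hf
    have heq : (∑ k ∈ Finset.range n, f t ^ k * f' * f t ^ (n-1-k)) * f t + f t ^ n * f'
        = ∑ k ∈ Finset.range (n+1), f t ^ k * f' * f t ^ (n + 1 - 1 - k) := by
      rw [Finset.sum_range_succ]
      congr 1
      · rw [Finset.sum_mul]
        apply Finset.sum_congr rfl
        intro k hk
        rw [Finset.mem_range] at hk
        have he : n + 1 - 1 - k = (n - 1 - k) + 1 := by omega
        rw [he, pow_succ, ← mul_assoc]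
      · rw [show n + 1 - 1 - n = 0 by omega, pow_zero, mul_one]
    have hfun : (fun s => f s ^ (n+1)) = fun s => f s ^ n * f s := funext fun s => pow_succ _ _
    rw [hfun, ← heq]
    exact h

lemma dD_scale (X Y : 𝔸) {n : ℕ} (hn : n ≠ 0) :
    dD X Y = ∑ k ∈ Finset.range n,
      exp ((n:ℝ)⁻¹ • X) ^ k * dD ((n:ℝ)⁻¹ • X) ((n:ℝ)⁻¹ • Y)
        * exp ((n:ℝ)⁻¹ • X) ^ (n - 1 - k) := by
  have hnR : ((n:ℝ)) ≠ 0 := Nat.cast_ne_zero.mpr hn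
  have hc : HasDerivAt (fun s : ℝ => X + s • Y) Y 0 := by
    simpa using ((hasDerivAt_id (0:ℝ)).smul_const Y).const_add X
  have h1 : HasDerivAt (fun s : ℝ => exp (X + s • Y)) (dD X Y) 0 := by
    have := dD_hasDerivAt hc
    simpa using this
  have hc2 : HasDerivAt (fun s : ℝ => (n:ℝ)⁻¹ • (X + s • Y)) ((n:ℝ)⁻¹ • Y) 0 :=
    hc.const_smul ((n:ℝ)⁻¹)
  have h2 : HasDerivAt (fun s : ℝ => exp ((n:ℝ)⁻¹ • (X + s • Y)))
      (dD ((n:ℝ)⁻¹ • X) ((n:ℝ)⁻¹ • Y)) 0 := by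
    have := dD_hasDerivAt hc2
    simpa using this
  have h3 := hasDerivAt_pow_comp h2 n
  simp only [zero_smul, add_zero] at h3
  have hfun : (fun s : ℝ => exp ((n:ℝ)⁻¹ • (X + s • Y)) ^ n)
      = fun s : ℝ => exp (X + s • Y) := by
    funext s
    letI : NormedAlgebra ℚ 𝔸 := NormedAlgebra.restrictScalars ℚ ℝ 𝔸
    rw [← exp_nsmul, ← Nat.cast_smul_eq_nsmul ℝ, smul_smul, mul_inv_cancel₀ hnR, one_smul]
  rw [hfun] at h3
  exact h1.unique h3

end Generic

open NormedSpace

noncomputable def snorm {N : ℕ} (z : Matrix (Fin N) (Fin N) ℝ) : ℝ :=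
  @norm _ (Matrix.normedAddCommGroup :
    NormedAddCommGroup (Matrix (Fin N) (Fin N) ℝ)).toNorm z

section SupSec
attribute [local instance] Matrix.normedAddCommGroup

lemma snorm_eq {N : ℕ} (z : Matrix (Fin N) (Fin N) ℝ) : snorm z = ‖z‖ := rfl

lemma snorm_nonneg' {N : ℕ} (z : Matrix (Fin N) (Fin N) ℝ) : 0 ≤ snorm z := by
  rw [snorm_eq]; exact norm_nonneg z

lemma entry_le_snorm {N : ℕ} (z : Matrix (Fin N) (Fin N) ℝ) (i j : Fin N) :
    ‖z i j‖ ≤ snorm z := by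
  rw [snorm_eq]; exact Matrix.norm_entry_le_entrywise_sup_norm z

end SupSec

section LinftySec
attribute [local instance] Matrix.linftyOpNormedRing Matrix.linftyOpNormedAlgebra

variable {N : ℕ}

example : CompleteSpace (Matrix (Fin N) (Fin N) ℝ) := by infer_instance
example [Nonempty (Fin N)] : NormOneClass (Matrix (Fin N) (Fin N) ℝ) := by infer_instance
example (X : Matrix (Fin N) (Fin N) ℝ) : IsUnit (exp X) := isUnit_exp X

lemma onorm_le_card_mul_snorm (z : Matrix (Fin N) (Fin N) ℝ) :
    ‖z‖ ≤ N * snorm z := by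
  rw [Matrix.linfty_opNorm_def]
  have hb : ∀ i : Fin N, (∑ j, ‖z i j‖₊ : NNReal) ≤ ⟨N * snorm z, mul_nonneg (Nat.cast_nonneg N) (snorm_nonneg' z)⟩ := by
    intro i
    have : (∑ j, ‖z i j‖₊ : NNReal) ≤ ∑ _j : Fin N, (⟨snorm z, snorm_nonneg' z⟩ : NNReal) := by
      apply Finset.sum_le_sum
      intro j _
      have := entry_le_snorm z i j
      exact NNReal.coe_le_coe.mp this
    refine this.trans ?_
    rw [Finset.sum_const, Finset.card_univ, Fintype.card_fin]
    apply NNReal.coe_le_coe.mp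
    exact le_of_eq (nsmul_eq_mul N (snorm z))
  have hsup : (Finset.univ.sup fun i : Fin N => ∑ j, ‖z i j‖₊)
      ≤ (⟨N * snorm z, mul_nonneg (Nat.cast_nonneg N) (snorm_nonneg' z)⟩ : NNReal) :=
    Finset.sup_le (fun i _ => hb i)
  calc ((Finset.univ.sup fun i : Fin N => ∑ j, ‖z i j‖₊ : NNReal) : ℝ)
      ≤ ((⟨N * snorm z, mul_nonneg (Nat.cast_nonneg N) (snorm_nonneg' z)⟩ : NNReal) : ℝ) :=
        NNReal.coe_le_coe.mpr hsup
    _ = N * snorm z := rfl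

end LinftySec

-- norm-free: the Leibniz rule for powers of units
lemma g_pow_rule {N : ℕ}
    (g : Matrix (Fin N) (Fin N) ℝ → Matrix (Fin N) (Fin N) ℝ)
    (hg : ∀ a b : (Matrix (Fin N) (Fin N) ℝ)ˣ,
      g ((a : Matrix (Fin N) (Fin N) ℝ) * (b : Matrix (Fin N) (Fin N) ℝ))
        = (a : Matrix (Fin N) (Fin N) ℝ) * g b + g a * (b : Matrix (Fin N) (Fin N) ℝ))
    (a : (Matrix (Fin N) (Fin N) ℝ)ˣ) (n : ℕ) :
    g ((↑a : Matrix (Fin N) (Fin N) ℝ) ^ n)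
      = ∑ k ∈ Finset.range n,
          (↑a : Matrix (Fin N) (Fin N) ℝ) ^ k * g ↑a * (↑a : Matrix (Fin N) (Fin N) ℝ) ^ (n-1-k) := by
  have hone : g 1 = 0 := by
    have h1 := hg 1 1
    simp only [Units.val_one, one_mul, mul_one] at h1
    exact (left_eq_add.mp h1)
  induction n with
  | zero => simpa using hone
  | succ n ih =>
    have hstep := hg (a ^ n) a
    rw [Units.val_pow_eq_pow_val] at hstep
    have hpow : (↑a : Matrix (Fin N) (Fin N) ℝ) ^ (n+1)
        = (↑a : Matrix (Fin N) (Fin N) ℝ) ^ n * (↑a : Matrix (Fin N) (Fin N) ℝ) := pow_succ _ _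
    rw [hpow, hstep, ih]
    rw [Finset.sum_range_succ]
    have h1 : ∀ k ∈ Finset.range n,
        (↑a : Matrix (Fin N) (Fin N) ℝ) ^ k * g ↑a * (↑a : Matrix (Fin N) (Fin N) ℝ) ^ (n+1-1-k)
          = ((↑a : Matrix (Fin N) (Fin N) ℝ) ^ k * g ↑a * (↑a : Matrix (Fin N) (Fin N) ℝ) ^ (n-1-k))
            * (↑a : Matrix (Fin N) (Fin N) ℝ) := by
      intro k hk
      rw [Finset.mem_range] at hk
      have he : n + 1 - 1 - k = (n - 1 - k) + 1 := by omega
      rw [he, pow_succ, ← mul_assoc]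
    rw [Finset.sum_congr rfl h1, ← Finset.sum_mul]
    rw [show n + 1 - 1 - n = 0 by omega, pow_zero, mul_one]
    ring_nf
    abel

section LinftySec2
attribute [local instance] Matrix.linftyOpNormedRing Matrix.linftyOpNormedAlgebra

variable {N d : ℕ}

lemma quant_of_sup (f : (Fin d → ℝ) → Matrix (Fin N) (Fin N) ℝ)
    (C ε : ℝ) (hε : 0 < ε) (h : ∀ v : Fin d → ℝ, dist v 0 < ε → snorm (f v) ≤ C * ‖v‖^2) :
    ∃ C' r : ℝ, 0 < r ∧ ∀ v : Fin d → ℝ, ‖v‖ ≤ r → ‖f v‖ ≤ C' * ‖v‖ ^ 2 := by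
  refine ⟨N * C, ε/2, by positivity, fun v hv => ?_⟩
  have h1 : snorm (f v) ≤ C * ‖v‖^2 := h v (by rw [dist_zero_right]; linarith)
  calc ‖f v‖ ≤ N * snorm (f v) := onorm_le_card_mul_snorm _
    _ ≤ N * (C * ‖v‖^2) := mul_le_mul_of_nonneg_left h1 (Nat.cast_nonneg N)
    _ = (N * C) * ‖v‖^2 := by ring

theorem keyAux [Nonempty (Fin N)]
    (g : Matrix (Fin N) (Fin N) ℝ → Matrix (Fin N) (Fin N) ℝ)
    (hg : ∀ a b : (Matrix (Fin N) (Fin N) ℝ)ˣ,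
      g ((a : Matrix (Fin N) (Fin N) ℝ) * (b : Matrix (Fin N) (Fin N) ℝ))
        = (a : Matrix (Fin N) (Fin N) ℝ) * g b + g a * (b : Matrix (Fin N) (Fin N) ℝ))
    (L : (Fin d → ℝ) →ₗ[ℝ] Matrix (Fin N) (Fin N) ℝ)
    (W : (Fin d → ℝ) →ₗ[ℝ] (Fin d → ℝ))
    (C r : ℝ) (hr : 0 < r)
    (hA : ∀ v : Fin d → ℝ, ‖v‖ ≤ r → ‖g (exp (L v)) - L (W v)‖ ≤ C * ‖v‖ ^ 2)
    (u : Fin d → ℝ) :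
    g (exp (L u)) = dD (L u) (L (W u)) := by
  set Lc := LinearMap.toContinuousLinearMap L with hLcdef
  set Mc := LinearMap.toContinuousLinearMap (L.comp W) with hMcdef
  set cL := @norm _ (@ContinuousLinearMap.hasOpNorm ℝ ℝ (Fin d → ℝ) (Matrix (Fin N) (Fin N) ℝ) _ _ _ _ _ _ _) Lc with hcLdef
  set cM := @norm _ (@ContinuousLinearMap.hasOpNorm ℝ ℝ (Fin d → ℝ) (Matrix (Fin N) (Fin N) ℝ) _ _ _ _ _ _ _) Mc with hcMdef
  have hcL0 : 0 ≤ cL := norm_nonneg _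
  have hcM0 : 0 ≤ cM := norm_nonneg _
  set E1 := Real.exp (2 * (cL * ‖u‖ + 1)) with hE1def
  set K1 := |C| + cL * cM * E1 with hK1def
  have hK10 : 0 ≤ K1 := by
    have h1 := abs_nonneg C
    have h2 : 0 ≤ cL * cM * E1 :=
      mul_nonneg (mul_nonneg hcL0 hcM0) (Real.exp_pos _).le
    rw [hK1def]
    linarith
  set K := Real.exp (cL * ‖u‖) * (K1 * ‖u‖ ^ 2) with hKdef
  have hKey : ∀ n : ℕ, 1 ≤ n → ‖u‖ / n ≤ r →
      ‖g (exp (L u)) - dD (L u) (L (W u))‖ ≤ K / n := by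
    intro n hn1 hnr
    have hnR : ((n:ℝ)) ≠ 0 := by positivity
    have hnpos : (0:ℝ) < n := by positivity
    have hn1R : (1:ℝ) ≤ n := by exact_mod_cast hn1
    set v := (n:ℝ)⁻¹ • u with hvdef
    have hvn : ‖v‖ = ‖u‖ / n := by
      rw [hvdef, norm_smul, norm_inv, Real.norm_natCast]
      ring
    have hvr : ‖v‖ ≤ r := by rw [hvn]; exact hnr
    have hvu : ‖v‖ ≤ ‖u‖ := by
      rw [hvn]
      exact div_le_self (norm_nonneg u) hn1R
    have hLv : L v = (n:ℝ)⁻¹ • L u := map_smul L _ _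
    have hLWv : L (W v) = (n:ℝ)⁻¹ • L (W u) := by rw [hvdef, map_smul, map_smul]
    have hexp : exp (L u) = exp (L v) ^ n := by
      rw [← Matrix.exp_nsmul, hLv, ← Nat.cast_smul_eq_nsmul ℝ, smul_smul, mul_inv_cancel₀ hnR, one_smul]
    obtain ⟨au, hau⟩ := Matrix.isUnit_exp (L v)
    have hgsum : g (exp (L v) ^ n) = ∑ k ∈ Finset.range n,
        exp (L v) ^ k * g (exp (L v)) * exp (L v) ^ (n-1-k) := by
      rw [← hau]
      exact g_pow_rule g hg au n
    have hdsum : dD (L u) (L (W u)) = ∑ k ∈ Finset.range n,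
        exp (L v) ^ k * dD (L v) (L (W v)) * exp (L v) ^ (n-1-k) := by
      have h := dD_scale (L u) (L (W u)) (n := n) (by omega)
      rw [h, ← hLv, ← hLWv]
      rfl
    set Δin := g (exp (L v)) - dD (L v) (L (W v)) with hΔin
    have hsplit : g (exp (L u)) - dD (L u) (L (W u)) = ∑ k ∈ Finset.range n,
        exp (L v) ^ k * Δin * exp (L v) ^ (n-1-k) := by
      rw [hexp, hgsum, hdsum, ← Finset.sum_sub_distrib]
      apply Finset.sum_congr rfl
      intro k _
      rw [hΔin, mul_sub, sub_mul]
    have hLvnorm : ‖L v‖ ≤ cL * ‖v‖ := by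
      have := Lc.le_opNorm v
      exact this
    have hLWvnorm : ‖L (W v)‖ ≤ cM * ‖v‖ := by
      have := Mc.le_opNorm v
      exact this
    have hLvu : ‖L v‖ ≤ cL * ‖u‖ :=
      hLvnorm.trans (mul_le_mul_of_nonneg_left hvu hcL0)
    have hΔin_bound : ‖Δin‖ ≤ K1 * ‖v‖^2 := by
      have h1 : ‖g (exp (L v)) - L (W v)‖ ≤ C * ‖v‖^2 := hA v hvr
      have h2 := dD_sub_self (L v) (L (W v))
      have e1 : Real.exp (2*(‖L v‖+1)) ≤ E1 := by
        rw [hE1def]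
        apply Real.exp_le_exp.mpr
        linarith
      have h3 : ‖L v‖ * ‖L (W v)‖ * Real.exp (2*(‖L v‖+1)) ≤ (cL * cM * E1) * ‖v‖^2 := by
        calc ‖L v‖ * ‖L (W v)‖ * Real.exp (2*(‖L v‖+1))
            ≤ (cL * ‖v‖) * (cM * ‖v‖) * E1 := by
              gcongr <;> first | exact norm_nonneg _ | positivity
          _ = (cL * cM * E1) * ‖v‖^2 := by ring
      calc ‖Δin‖ = ‖(g (exp (L v)) - L (W v)) - (dD (L v) (L (W v)) - L (W v))‖ := by
            rw [hΔin]; congr 1; abel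
        _ ≤ ‖g (exp (L v)) - L (W v)‖ + ‖dD (L v) (L (W v)) - L (W v)‖ := norm_sub_le _ _
        _ ≤ C * ‖v‖^2 + (cL * cM * E1) * ‖v‖^2 := add_le_add h1 (h2.trans h3)
        _ = (C + cL * cM * E1) * ‖v‖^2 := by ring
        _ ≤ K1 * ‖v‖^2 := by
            apply mul_le_mul_of_nonneg_right _ (sq_nonneg _)
            rw [hK1def]
            have := le_abs_self C
            linarith
    have ha_norm : ‖exp (L v)‖ ≤ Real.exp (cL * ‖u‖ / n) := by
      refine (norm_exp_le _).trans (Real.exp_le_exp.mpr ?_)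
      calc ‖L v‖ ≤ cL * ‖v‖ := hLvnorm
        _ = cL * ‖u‖ / n := by rw [hvn]; ring
    have houter : ∀ k ∈ Finset.range n, ‖exp (L v) ^ k * Δin * exp (L v) ^ (n-1-k)‖
        ≤ Real.exp (cL * ‖u‖) * ‖Δin‖ := by
      intro k hk
      rw [Finset.mem_range] at hk
      have hexpnn : (0:ℝ) ≤ Real.exp (cL * ‖u‖ / n) := (Real.exp_pos _).le
      calc ‖exp (L v) ^ k * Δin * exp (L v) ^ (n-1-k)‖
          ≤ ‖exp (L v) ^ k‖ * ‖Δin‖ * ‖exp (L v) ^ (n-1-k)‖ := norm_triple _ _ _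
        _ ≤ ‖exp (L v)‖^k * ‖Δin‖ * ‖exp (L v)‖^(n-1-k) := by
            gcongr <;> [exact norm_pow_le _ k; exact norm_pow_le _ (n-1-k)]
        _ = ‖exp (L v)‖^(n-1) * ‖Δin‖ := by
            rw [mul_comm (‖exp (L v)‖^k) ‖Δin‖, mul_assoc, ← pow_add, mul_comm ‖Δin‖ _]
            congr 2
            omega
        _ ≤ (Real.exp (cL * ‖u‖ / n))^(n-1) * ‖Δin‖ := by
            apply mul_le_mul_of_nonneg_right _ (norm_nonneg _)
            exact pow_le_pow_left₀ (norm_nonneg _) ha_norm _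
        _ ≤ Real.exp (cL * ‖u‖) * ‖Δin‖ := by
            apply mul_le_mul_of_nonneg_right _ (norm_nonneg _)
            rw [← Real.exp_nat_mul]
            apply Real.exp_le_exp.mpr
            have hnn : ((n-1 : ℕ):ℝ) ≤ (n:ℝ) := by exact_mod_cast Nat.sub_le n 1
            have hq : (0:ℝ) ≤ cL * ‖u‖ / n := by positivity
            calc ((n-1:ℕ):ℝ) * (cL * ‖u‖ / n) ≤ (n:ℝ) * (cL * ‖u‖ / n) :=
                  mul_le_mul_of_nonneg_right hnn hq
              _ = cL * ‖u‖ := by field_simp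
    calc ‖g (exp (L u)) - dD (L u) (L (W u))‖
        = ‖∑ k ∈ Finset.range n, exp (L v) ^ k * Δin * exp (L v) ^ (n-1-k)‖ := by
          rw [hsplit]
      _ ≤ ∑ k ∈ Finset.range n, ‖exp (L v) ^ k * Δin * exp (L v) ^ (n-1-k)‖ :=
          norm_sum_le _ _
      _ ≤ ∑ _k ∈ Finset.range n, Real.exp (cL * ‖u‖) * ‖Δin‖ := Finset.sum_le_sum houter
      _ = n * (Real.exp (cL * ‖u‖) * ‖Δin‖) := by
          rw [Finset.sum_const, Finset.card_range, nsmul_eq_mul]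
      _ ≤ n * (Real.exp (cL * ‖u‖) * (K1 * ‖v‖^2)) := by
          apply mul_le_mul_of_nonneg_left _ (by positivity)
          exact mul_le_mul_of_nonneg_left hΔin_bound (Real.exp_pos _).le
      _ = K / n := by
          rw [hvn, hKdef]
          field_simp
  have hconv : ∀ᶠ n : ℕ in Filter.atTop, ‖u‖ / (n:ℝ) ≤ r := by
    have ht := tendsto_const_div_atTop_nhds_zero_nat ‖u‖
    exact ht.eventually (eventually_le_nhds hr)
  have hev : ∀ᶠ n : ℕ in Filter.atTop,
      ‖g (exp (L u)) - dD (L u) (L (W u))‖ ≤ K / n := by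
    filter_upwards [Filter.eventually_ge_atTop 1, hconv] with n h1 h2
    exact hKey n h1 h2
  have h0 : Filter.Tendsto (fun n : ℕ => K / (n:ℝ)) Filter.atTop (nhds 0) :=
    tendsto_const_div_atTop_nhds_zero_nat K
  have hfin : ‖g (exp (L u)) - dD (L u) (L (W u))‖ ≤ 0 := ge_of_tendsto h0 hev
  have := norm_le_zero_iff.mp hfin
  exact sub_eq_zero.mp this

theorem linftyKeyT [Nonempty (Fin N)]
    (g : Matrix (Fin N) (Fin N) ℝ → Matrix (Fin N) (Fin N) ℝ)
    (hg : ∀ a b : (Matrix (Fin N) (Fin N) ℝ)ˣ,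
      g ((a : Matrix (Fin N) (Fin N) ℝ) * (b : Matrix (Fin N) (Fin N) ℝ))
        = (a : Matrix (Fin N) (Fin N) ℝ) * g b + g a * (b : Matrix (Fin N) (Fin N) ℝ))
    (L : (Fin d → ℝ) →ₗ[ℝ] Matrix (Fin N) (Fin N) ℝ)
    (W : (Fin d → ℝ) →ₗ[ℝ] (Fin d → ℝ))
    (C r : ℝ) (hr : 0 < r)
    (hA : ∀ v : Fin d → ℝ, ‖v‖ ≤ r → ‖g (exp (L v)) - L (W v)‖ ≤ C * ‖v‖ ^ 2)
    (ξ : ℝ → Fin d → ℝ) (t : ℝ) (hξ : HasDerivAt ξ (W (ξ t)) t) :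
    Filter.Tendsto (slope (fun s => exp (L (ξ s))) t) (nhdsWithin t {t}ᶜ)
      (nhds (g (exp (L (ξ t))))) := by
  refine hasDerivAt_iff_tendsto_slope.mp ?_
  rw [keyAux g hg L W C r hr hA (ξ t)]
  have hc : HasDerivAt (fun s => L (ξ s)) (L (W (ξ t))) t := by
    have h := (LinearMap.toContinuousLinearMap L).hasFDerivAt.comp_hasDerivAt t hξ
    exact h
  exact dD_hasDerivAt hc

end LinftySec2

end AuxDev


open Matrix
attribute [local instance] Matrix.normedAddCommGroup Matrix.normedSpace

/-- Log-linear property of the error: if `g_t(ab) = a g_t(b) + g_t(a) b`,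
`A_t` is the first-order linearization of `g_t` at the identity in exponential
coordinates (`g_t(exp(ξ)) = L(A_t ξ) + O(‖ξ‖²)`, with `L` the linear identification
of `ℝ^d` with the Lie algebra and `exp(ξ) = exp_m(L ξ)`), `ξ_t` solves the linear
ODE `dξ/dt = A_t ξ`, and `η_t` solves `dη/dt = g_t(η)` (solutions being unique)
with `η_0 = exp(ξ_0)`, then `η_t = exp(ξ_t)` for all `t ≥ 0`, for arbitrarily large `ξ_0`. -/
theorem stmt9 {N d : ℕ}
    (g : ℝ → Matrix (Fin N) (Fin N) ℝ → Matrix (Fin N) (Fin N) ℝ)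
    (hg : ∀ (t : ℝ) (a b : (Matrix (Fin N) (Fin N) ℝ)ˣ),
      g t (uval a * uval b) = uval a * g t (uval b) + g t (uval a) * uval b)
    (L : (Fin d → ℝ) →ₗ[ℝ] Matrix (Fin N) (Fin N) ℝ)
    (A : ℝ → Matrix (Fin d) (Fin d) ℝ)
    (hA : ∀ t : ℝ,
      (fun ξ : Fin d → ℝ => g t (NormedSpace.exp (L ξ)) - L (A t *ᵥ ξ))
        =O[nhds 0] (fun ξ : Fin d → ℝ => ‖ξ‖ ^ 2))
    (huniq : ∀ η₁ η₂ : ℝ → Matrix (Fin N) (Fin N) ℝ,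
      (∀ t, HasDerivAt η₁ (g t (η₁ t)) t) →
      (∀ t, HasDerivAt η₂ (g t (η₂ t)) t) → η₁ 0 = η₂ 0 → η₁ = η₂)
    (ξ : ℝ → Fin d → ℝ) (η : ℝ → Matrix (Fin N) (Fin N) ℝ)
    (hξ : ∀ t, HasDerivAt ξ (A t *ᵥ ξ t) t)
    (hη : ∀ t, HasDerivAt η (g t (η t)) t)
    (h0 : η 0 = NormedSpace.exp (L (ξ 0))) :
    ∀ t : ℝ, 0 ≤ t → η t = NormedSpace.exp (L (ξ t)) := by
  rcases Nat.eq_zero_or_pos N with hN | hN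
  · subst hN
    intro t _
    apply Matrix.ext
    intro i j
    exact i.elim0
  · haveI : Nonempty (Fin N) := Fin.pos_iff_nonempty.mp hN
    have hD : ∀ t, HasDerivAt (fun s => NormedSpace.exp (L (ξ s)))
        (g t (NormedSpace.exp (L (ξ t)))) t := by
      intro t
      obtain ⟨C, hC⟩ := Asymptotics.isBigO_iff.mp (hA t)
      rw [Metric.eventually_nhds_iff] at hC
      obtain ⟨ε, hε, hball⟩ := hC
      have hquant := quant_of_sup
        (fun v => g t (NormedSpace.exp (L v)) - L (Matrix.mulVecLin (A t) v)) C ε hε ?_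
      · obtain ⟨C', r, hr, hA'⟩ := hquant
        have hW : HasDerivAt ξ ((Matrix.mulVecLin (A t)) (ξ t)) t := by
          simpa [Matrix.mulVecLin_apply] using hξ t
        have hkey := linftyKeyT (g t) (fun a b => hg t a b) L (Matrix.mulVecLin (A t))
          C' r hr hA' ξ t hW
        refine hasDerivAt_iff_tendsto_slope.mpr ?_
        exact hkey
      · intro v hv
        have hb := hball hv
        rw [snorm_eq]
        have hnn : ‖(‖v‖ ^ 2 : ℝ)‖ = ‖v‖ ^ 2 := by
          rw [Real.norm_eq_abs, abs_of_nonneg (by positivity)]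
        rw [hnn] at hb
        simpa [Matrix.mulVecLin_apply] using hb
    have heq := huniq η (fun s => NormedSpace.exp (L (ξ s))) hη hD h0
    intro t _
    rw [heq]
end

section
/- Let Φ_t be the flow of dη/dt = g_t(η) where g_t(ab) = a g_t(b) + g_t(a) b. Then Φ_t(exp(ξ₀)) = exp(F_t ξ₀) where F_t is the solution of the matrix ODE F_0 = Id, dF_t/dt = A_t F_t, and A_t is the linearization of g_t at the identity in exponential coordinates. -/
open Matrix
/-- Evaluation of a matrix entry, as a linear map. -/
def entryLM {n1 n2 : ℕ} (i : Fin n1) (j : Fin n2) : Matrix (Fin n1) (Fin n2) ℝ →ₗ[ℝ] ℝ where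
  toFun A := A i j
  map_add' _ _ := rfl
  map_smul' _ _ := rfl

section AuxLinfty

open NormedSpace

attribute [local instance] Matrix.linftyOpNormedRing Matrix.linftyOpNormedAlgebra

/-- The topology of the linfty operator norm on square matrices. -/
noncomputable abbrev linftyTopMat {n : ℕ} : TopologicalSpace (Matrix (Fin n) (Fin n) ℝ) :=
  (Matrix.linftyOpNormedRing : NormedRing (Matrix (Fin n) (Fin n) ℝ)).toUniformSpace.toTopologicalSpace

/-- The topology of the norm on `ℝ × ℝ`. -/
noncomputable abbrev normTopProd : TopologicalSpace (ℝ × ℝ) :=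
  (inferInstance : NormedAddCommGroup (ℝ × ℝ)).toUniformSpace.toTopologicalSpace

attribute [local instance] linftyTopMat normTopProd

variable {N : ℕ}

theorem hasDerivAt_entries_linfty {f : ℝ → Matrix (Fin N) (Fin N) ℝ}
    {b : Matrix (Fin N) (Fin N) ℝ} {t : ℝ} :
    HasDerivAt f b t ↔ ∀ i j, HasDerivAt (fun s => f s i j) (b i j) t := by
  constructor
  · intro h i j
    have hc := (entryLM i j).toContinuousLinearMap.hasFDerivAt (x := f t)
    exact hc.comp_hasDerivAt t h
  · intro h
    have this1 : ∀ s, f s = ∑ p : Fin N × Fin N, f s p.1 p.2 • single p.1 p.2 (1:ℝ) := by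
      intro s
      conv_lhs => rw [matrix_eq_sum_single (f s), ← Finset.sum_product']
      simp [smul_single]
    have hb : b = ∑ p : Fin N × Fin N, b p.1 p.2 • single p.1 p.2 (1:ℝ) := by
      conv_lhs => rw [matrix_eq_sum_single b, ← Finset.sum_product']
      simp [smul_single]
    have key : HasDerivAt (fun s => ∑ p : Fin N × Fin N, f s p.1 p.2 • single p.1 p.2 (1:ℝ))
        (∑ p : Fin N × Fin N, b p.1 p.2 • single p.1 p.2 (1:ℝ)) t :=
      HasDerivAt.fun_sum fun p _ => (h p.1 p.2).smul_const _
    rw [← hb] at key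
    exact key.congr_of_eventuallyEq (Filter.Eventually.of_forall fun s => (this1 s))

theorem key_linfty {c : ℝ → Matrix (Fin N) (Fin N) ℝ} {m b : Matrix (Fin N) (Fin N) ℝ} {t₀ : ℝ}
    (hc : HasDerivAt c b t₀) (hct : c t₀ = m)
    (φ : ℝ → Matrix (Fin N) (Fin N) ℝ) (hφ0 : φ 0 = 0)
    (hco : ∀ s r : ℝ, φ (s + r) = exp (s • m) * φ r + φ s * exp (r • m))
    (hφd : HasDerivAt φ b 0) :
    HasDerivAt (fun t => exp (c t)) (φ 1) t₀ := by
  -- exp is smooth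
  have hexp : ∀ x : Matrix (Fin N) (Fin N) ℝ, ContDiffAt ℝ 2 (exp) x :=
    fun x => (exp_analytic (𝕂 := ℝ) x).contDiffAt
  -- the ODE satisfied by φ
  have hφ' : ∀ s : ℝ, HasDerivAt φ (exp (s • m) * b + φ s * m) s := by
    intro s
    have h1 : HasDerivAt (fun r : ℝ => exp (s • m) * φ r + φ s * exp (r • m))
        (exp (s • m) * b + φ s * (exp ((0:ℝ) • m) * m)) 0 :=
      (hφd.const_mul _).add ((hasDerivAt_exp_smul_const m (0:ℝ)).const_mul (φ s))
    have h2 : HasDerivAt (fun r : ℝ => φ (s + r))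
        (exp (s • m) * b + φ s * m) 0 := by
      simpa [hco] using h1
    have h3 : HasDerivAt (fun r : ℝ => φ (s + r)) (exp (s • m) * b + φ s * m) (-s + s) := by
      simpa using h2
    have h4 := HasDerivAt.comp_const_add (-s) s h3
    simpa using h4
  -- the two-parameter map G
  set G : ℝ × ℝ → Matrix (Fin N) (Fin N) ℝ := fun p => exp (p.1 • (m + p.2 • b)) with hGdef
  have hq : ContDiff ℝ 2 (fun p : ℝ × ℝ => p.1 • (m + p.2 • b)) :=
    contDiff_fst.smul (contDiff_const.add (contDiff_snd.smul contDiff_const))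
  have hG2 : ∀ p : ℝ × ℝ, ContDiffAt ℝ 2 G p := fun p =>
    (hexp _).comp p (hq.contDiffAt)
  have hGdiff : ∀ p : ℝ × ℝ, DifferentiableAt ℝ G p := fun p =>
    (hG2 p).differentiableAt (by norm_num)
  -- partial derivative in the first variable
  have hP : ∀ p : ℝ × ℝ, fderiv ℝ G p (1, 0) = G p * (m + p.2 • b) := by
    intro p
    have h1 : HasDerivAt (fun u : ℝ => G (u, p.2)) (exp (p.1 • (m + p.2 • b)) * (m + p.2 • b)) p.1 :=
      hasDerivAt_exp_smul_const (m + p.2 • b) p.1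
    have hcurve : HasDerivAt (fun u : ℝ => (u, p.2)) ((1:ℝ), (0:ℝ)) p.1 :=
      (hasDerivAt_id p.1).prodMk (hasDerivAt_const p.1 p.2)
    have h2 : HasDerivAt (fun u : ℝ => G (u, p.2)) (fderiv ℝ G (p.1, p.2) ((1:ℝ), (0:ℝ))) p.1 :=
      by have := (hGdiff (p.1, p.2)).hasFDerivAt.comp_hasDerivAt p.1 hcurve; exact this
    have := h2.unique h1
    simpa [hGdef, smul_add] using this
  have hexpd : ∀ x : Matrix (Fin N) (Fin N) ℝ, DifferentiableAt ℝ (exp) x :=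
    fun x => (hexp x).differentiableAt (by norm_num)
  -- κ and its derivative
  set κ : ℝ → Matrix (Fin N) (Fin N) ℝ := fun s => fderiv ℝ G (s, 0) (0, 1) with hκdef
  have hfd : ∀ p : ℝ × ℝ, DifferentiableAt ℝ (fderiv ℝ G) p := by
    intro p
    have : ContDiffAt ℝ 1 (fderiv ℝ G) p := by
      have := (hG2 p).fderiv_right (m := 1) (by norm_num)
      exact this
    exact this.differentiableAt (by norm_num)
  have hκ' : ∀ s : ℝ, HasDerivAt κ (exp (s • m) * b + κ s * m) s := by
    intro s
    have hHdiff : DifferentiableAt ℝ (fun p : ℝ × ℝ => fderiv ℝ G p (0, 1)) (s, 0) :=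
      (hfd (s, 0)).clm_apply (differentiableAt_const _)
    have hcurve : HasDerivAt (fun u : ℝ => (u, (0:ℝ))) ((1:ℝ), (0:ℝ)) s :=
      (hasDerivAt_id s).prodMk (hasDerivAt_const s 0)
    have hκd : HasDerivAt κ
        (fderiv ℝ (fun p : ℝ × ℝ => fderiv ℝ G p (0, 1)) (s, 0) ((1:ℝ), (0:ℝ))) s :=
      by have := hHdiff.hasFDerivAt.comp_hasDerivAt s hcurve; exact this
    -- rewrite the derivative via symmetry of the second derivative
    have e1 : fderiv ℝ (fun p : ℝ × ℝ => fderiv ℝ G p (0, 1)) (s, 0) ((1:ℝ), (0:ℝ))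
        = fderiv ℝ (fderiv ℝ G) (s, 0) ((1:ℝ), (0:ℝ)) ((0:ℝ), (1:ℝ)) := by
      rw [fderiv_clm_apply (hfd (s, 0)) (differentiableAt_const _)]
      simp
    have e2 : fderiv ℝ (fderiv ℝ G) (s, 0) ((1:ℝ), (0:ℝ)) ((0:ℝ), (1:ℝ))
        = fderiv ℝ (fderiv ℝ G) (s, 0) ((0:ℝ), (1:ℝ)) ((1:ℝ), (0:ℝ)) :=
      ((hG2 (s, 0)).isSymmSndFDerivAt (by simp [minSmoothness_of_isRCLikeNormedField])).eq _ _
    have e3 : fderiv ℝ (fderiv ℝ G) (s, 0) ((0:ℝ), (1:ℝ)) ((1:ℝ), (0:ℝ))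
        = fderiv ℝ (fun p : ℝ × ℝ => fderiv ℝ G p ((1:ℝ), (0:ℝ))) (s, 0) ((0:ℝ), (1:ℝ)) := by
      rw [fderiv_clm_apply (hfd (s, 0)) (differentiableAt_const _)]
      simp
    -- compute the ε-derivative of the first partial
    have e4 : HasDerivAt (fun ε : ℝ => fderiv ℝ G (s, ε) ((1:ℝ), (0:ℝ)))
        (fderiv ℝ (fun p : ℝ × ℝ => fderiv ℝ G p ((1:ℝ), (0:ℝ))) (s, 0) ((0:ℝ), (1:ℝ))) 0 := by
      have hHdiff' : DifferentiableAt ℝ (fun p : ℝ × ℝ => fderiv ℝ G p ((1:ℝ), (0:ℝ))) (s, 0) :=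
        (hfd (s, 0)).clm_apply (differentiableAt_const _)
      have hcurve' : HasDerivAt (fun ε : ℝ => ((s:ℝ), ε)) ((0:ℝ), (1:ℝ)) 0 :=
        (hasDerivAt_const 0 s).prodMk (hasDerivAt_id 0)
      exact hHdiff'.hasFDerivAt.comp_hasDerivAt 0 hcurve'
    have e5 : HasDerivAt (fun ε : ℝ => G (s, ε) * (m + ε • b))
        (κ s * m + exp (s • m) * b) 0 := by
      have hGε : HasDerivAt (fun ε : ℝ => G (s, ε)) (κ s) 0 := by
        have hcurve' : HasDerivAt (fun ε : ℝ => ((s:ℝ), ε)) ((0:ℝ), (1:ℝ)) 0 :=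
          (hasDerivAt_const 0 s).prodMk (hasDerivAt_id 0)
        exact (hGdiff (s, 0)).hasFDerivAt.comp_hasDerivAt 0 hcurve'
      have hlin : HasDerivAt (fun ε : ℝ => m + ε • b) b 0 := by
        simpa using ((hasDerivAt_id (0:ℝ)).smul_const b).const_add m
      have := hGε.mul hlin
      simpa [hGdef, Pi.mul_def] using this
    have e6 : HasDerivAt (fun ε : ℝ => fderiv ℝ G (s, ε) ((1:ℝ), (0:ℝ)))
        (κ s * m + exp (s • m) * b) 0 := by
      refine e5.congr_of_eventuallyEq (Filter.Eventually.of_forall fun ε => ?_)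
      simpa using hP (s, ε)
    have e7 := e4.unique e6
    rw [e1, e2, e3, e7] at hκd
    convert hκd using 1
    abel
  -- κ 0 = 0
  have hκ0 : κ 0 = 0 := by
    have hcurve' : HasDerivAt (fun ε : ℝ => ((0:ℝ), ε)) ((0:ℝ), (1:ℝ)) 0 :=
      (hasDerivAt_const 0 0).prodMk (hasDerivAt_id 0)
    have h1 : HasDerivAt (fun ε : ℝ => G (0, ε)) (κ 0) 0 :=
      (hGdiff (0, 0)).hasFDerivAt.comp_hasDerivAt 0 hcurve'
    have h2 : HasDerivAt (fun ε : ℝ => G (0, ε)) 0 0 := by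
      have : (fun ε : ℝ => G (0, ε)) = fun _ => (1 : Matrix (Fin N) (Fin N) ℝ) := by
        funext ε; simp [hGdef]
      rw [this]
      exact hasDerivAt_const _ _
    exact h1.unique h2
  -- κ 1 = fderiv exp m b
  have hq1 : DifferentiableAt ℝ (fun p : ℝ × ℝ => p.1 • (m + p.2 • b)) (1, 0) :=
    (hq.differentiable (by norm_num)).differentiableAt
  have hκ1 : κ 1 = fderiv ℝ (exp) m b := by
    have hc1 : fderiv ℝ G (1, 0) ((0:ℝ), (1:ℝ))
        = fderiv ℝ (exp) ((1:ℝ) • (m + (0:ℝ) • b))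
            (fderiv ℝ (fun p : ℝ × ℝ => p.1 • (m + p.2 • b)) (1, 0) ((0:ℝ), (1:ℝ))) := by
      have hcomp := fderiv_comp ((1:ℝ), (0:ℝ)) (hexpd ((fun p : ℝ × ℝ => p.1 • (m + p.2 • b)) (1, 0)))
        hq1
      rw [hGdef, show (fun p : ℝ × ℝ => exp (p.1 • (m + p.2 • b)))
        = (exp) ∘ (fun p : ℝ × ℝ => p.1 • (m + p.2 • b)) from rfl, hcomp]
      simp
    have hq2 : fderiv ℝ (fun p : ℝ × ℝ => p.1 • (m + p.2 • b)) (1, 0) ((0:ℝ), (1:ℝ)) = b := by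
      have hd : HasDerivAt (fun ε : ℝ => (1:ℝ) • (m + ε • b)) b 0 := by
        simpa using (((hasDerivAt_id (0:ℝ)).smul_const b).const_add m).const_smul (1:ℝ)
      have hcurve' : HasDerivAt (fun ε : ℝ => ((1:ℝ), ε)) ((0:ℝ), (1:ℝ)) 0 :=
        (hasDerivAt_const 0 1).prodMk (hasDerivAt_id 0)
      have hd2 : HasDerivAt (fun ε : ℝ => (1:ℝ) • (m + ε • b))
          (fderiv ℝ (fun p : ℝ × ℝ => p.1 • (m + p.2 • b)) (1, 0) ((0:ℝ), (1:ℝ))) 0 :=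
        hq1.hasFDerivAt.comp_hasDerivAt 0 hcurve'
      exact hd2.unique hd
    rw [hκdef]
    simp only [hc1, hq2]
    norm_num
  -- uniqueness of the linear ODE: φ = κ on [0,1]
  have hδ' : ∀ s : ℝ, HasDerivAt (fun u => φ u - κ u) ((φ s - κ s) * m) s := by
    intro s
    have := (hφ' s).sub (hκ' s)
    refine this.congr_deriv ?_
    noncomm_ring
  have hρ' : ∀ s : ℝ, HasDerivAt (fun u => (φ u - κ u) * exp (u • (-m))) 0 s := by
    intro s
    have h1 := (hδ' s).mul (hasDerivAt_exp_smul_const (-m) s)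
    have hcm : m * exp (s • (-m)) = exp (s • (-m)) * m := by
      have : Commute m (s • (-m)) := ((Commute.refl m).neg_right).smul_right s
      exact (this.exp_right).eq
    refine h1.congr_deriv ?_
    have hx : exp (s • -m) * -m = -(m * exp (s • -m)) := by rw [mul_neg, ← hcm]
    rw [hx, mul_neg, ← mul_assoc, add_neg_cancel]
  have hρconst : ∀ x y : ℝ, (φ x - κ x) * exp (x • (-m)) = (φ y - κ y) * exp (y • (-m)) := by
    intro x y
    exact is_const_of_deriv_eq_zero (fun u => (hρ' u).differentiableAt)
      (fun u => (hρ' u).deriv) x y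
  have hρ10 : (φ 1 - κ 1) * exp ((1:ℝ) • (-m)) = 0 := by
    rw [hρconst 1 0]
    simp [hφ0, hκ0]
  have hinv : exp (-m) * exp m = 1 := by
    rw [← exp_add_of_commute ((Commute.refl m).neg_left)]
    simp
  have hφκ : φ 1 = κ 1 := by
    have h2 : (φ 1 - κ 1) * (exp (-m) * exp m) = 0 := by
      rw [← mul_assoc]
      simpa using congrArg (· * exp m) hρ10
    rw [hinv, mul_one, sub_eq_zero] at h2
    exact h2
  -- final assembly
  have hfinal : HasDerivAt (fun t => exp (c t)) (fderiv ℝ (exp) m b) t₀ := by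
    have := (hexpd (c t₀)).hasFDerivAt.comp_hasDerivAt t₀ hc
    rwa [hct] at this
  rw [hφκ, hκ1]
  exact hfinal

end AuxLinfty

attribute [local instance] Matrix.normedAddCommGroup Matrix.normedSpace

section Sup

variable {N : ℕ}

theorem hasDerivAt_entries_sup {f : ℝ → Matrix (Fin N) (Fin N) ℝ}
    {b : Matrix (Fin N) (Fin N) ℝ} {t : ℝ} :
    HasDerivAt f b t ↔ ∀ i j, HasDerivAt (fun s => f s i j) (b i j) t := by
  constructor
  · intro h i j
    have hc := (entryLM i j).toContinuousLinearMap.hasFDerivAt (x := f t)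
    exact hc.comp_hasDerivAt t h
  · intro h
    have this1 : ∀ s, f s = ∑ p : Fin N × Fin N, f s p.1 p.2 • single p.1 p.2 (1:ℝ) := by
      intro s
      conv_lhs => rw [matrix_eq_sum_single (f s), ← Finset.sum_product']
      simp [smul_single]
    have hb : b = ∑ p : Fin N × Fin N, b p.1 p.2 • single p.1 p.2 (1:ℝ) := by
      conv_lhs => rw [matrix_eq_sum_single b, ← Finset.sum_product']
      simp [smul_single]
    have key : HasDerivAt (fun s => ∑ p : Fin N × Fin N, f s p.1 p.2 • single p.1 p.2 (1:ℝ))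
        (∑ p : Fin N × Fin N, b p.1 p.2 • single p.1 p.2 (1:ℝ)) t :=
      HasDerivAt.fun_sum fun p _ => (h p.1 p.2).smul_const _
    rw [← hb] at key
    exact key.congr_of_eventuallyEq (Filter.Eventually.of_forall fun s => (this1 s))

end Sup

/-- If `Φ_t` is the flow of `dη/dt = g_t(η)` with `g_t(ab) = a g_t(b) + g_t(a) b`,
then `Φ_t(exp(ξ₀)) = exp(F_t ξ₀)` where `F_t` solves `F_0 = Id`, `dF_t/dt = A_t F_t`,
and `A_t` is the linearization of `g_t` at the identity in exponential coordinates. -/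
theorem stmt10 {N d : ℕ}
    (g : ℝ → Matrix (Fin N) (Fin N) ℝ → Matrix (Fin N) (Fin N) ℝ)
    (hg : ∀ (t : ℝ) (a b : (Matrix (Fin N) (Fin N) ℝ)ˣ),
      g t (uval a * uval b) = uval a * g t (uval b) + g t (uval a) * uval b)
    (L : (Fin d → ℝ) →ₗ[ℝ] Matrix (Fin N) (Fin N) ℝ)
    (A : ℝ → Matrix (Fin d) (Fin d) ℝ)
    (hA : ∀ t : ℝ,
      (fun ξ : Fin d → ℝ => g t (NormedSpace.exp (L ξ)) - L (A t *ᵥ ξ))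
        =O[nhds 0] (fun ξ : Fin d → ℝ => ‖ξ‖ ^ 2))
    (Φ : ℝ → Matrix (Fin N) (Fin N) ℝ → Matrix (Fin N) (Fin N) ℝ)
    (hΦ0 : ∀ x, Φ 0 x = x)
    (hΦ : ∀ x t, HasDerivAt (fun s => Φ s x) (g t (Φ t x)) t)
    (huniq : ∀ η : ℝ → Matrix (Fin N) (Fin N) ℝ,
      (∀ t, HasDerivAt η (g t (η t)) t) → ∀ t, η t = Φ t (η 0))
    (F : ℝ → Matrix (Fin d) (Fin d) ℝ)
    (hF0 : F 0 = 1)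
    (hF : ∀ t, HasDerivAt F (A t * F t) t) :
    ∀ (t : ℝ) (ξ0 : Fin d → ℝ),
      Φ t (NormedSpace.exp (L ξ0)) = NormedSpace.exp (L (F t *ᵥ ξ0)) := by
  intro t ξ0
  -- `g t 1 = 0`
  have hg1 : ∀ τ : ℝ, g τ 1 = 0 := by
    intro τ
    have h := hg τ 1 1
    simp only [uval, Units.val_one, mul_one, one_mul] at h
    have := h
    rw [left_eq_add] at this
    exact this
  set η : ℝ → Matrix (Fin N) (Fin N) ℝ := fun s => NormedSpace.exp (L (F s *ᵥ ξ0)) with hηdef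
  have hηd : ∀ t₀ : ℝ, HasDerivAt η (g t₀ (η t₀)) t₀ := by
    intro t₀
    set ξ : Fin d → ℝ := F t₀ *ᵥ ξ0 with hξdef
    set mm : Matrix (Fin N) (Fin N) ℝ := L ξ with hmmdef
    set bb : Matrix (Fin N) (Fin N) ℝ := L (A t₀ *ᵥ ξ) with hbbdef
    -- the curve in the Lie algebra and its derivative (sup world)
    set Lmap : Matrix (Fin d) (Fin d) ℝ →ₗ[ℝ] Matrix (Fin N) (Fin N) ℝ :=
      { toFun := fun M => L (M *ᵥ ξ0)
        map_add' := fun M M' => by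
          show L ((M + M') *ᵥ ξ0) = L (M *ᵥ ξ0) + L (M' *ᵥ ξ0)
          rw [add_mulVec, map_add]
        map_smul' := fun r M => by
          show L ((r • M) *ᵥ ξ0) = (RingHom.id ℝ) r • L (M *ᵥ ξ0)
          rw [smul_mulVec, _root_.map_smul, RingHom.id_apply] }
      with hLmapdef
    have hc_sup : HasDerivAt (fun s => L (F s *ᵥ ξ0)) bb t₀ := by
      have h1 := (Lmap.toContinuousLinearMap.hasFDerivAt
        (x := F t₀)).comp_hasDerivAt t₀ (hF t₀)
      have h2 : Lmap (A t₀ * F t₀) = bb := by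
        simp only [hLmapdef, LinearMap.coe_mk, AddHom.coe_mk, ← mulVec_mulVec, hbbdef, hξdef]
      rw [← h2]; exact h1
    have hc_lin := hasDerivAt_entries_linfty.mpr (fun i j => (hasDerivAt_entries_sup.mp hc_sup i j))
    -- the function φ
    set φ : ℝ → Matrix (Fin N) (Fin N) ℝ := fun s => g t₀ (NormedSpace.exp (s • mm)) with hφdef
    have hφ0 : φ 0 = 0 := by
      simp only [hφdef, zero_smul, NormedSpace.exp_zero]
      exact hg1 t₀
    have hco : ∀ s r : ℝ, φ (s + r)
        = NormedSpace.exp (s • mm) * φ r + φ s * NormedSpace.exp (r • mm) := by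
      intro s r
      have hsplit : NormedSpace.exp ((s + r) • mm)
          = NormedSpace.exp (s • mm) * NormedSpace.exp (r • mm) := by
        rw [add_smul]
        exact Matrix.exp_add_of_commute _ _ (((Commute.refl mm).smul_left s).smul_right r)
      have hu1 := Matrix.isUnit_exp (s • mm)
      have hu2 := Matrix.isUnit_exp (r • mm)
      have h := hg t₀ hu1.unit hu2.unit
      simp only [uval, IsUnit.unit_spec] at h
      simp only [hφdef, hsplit, h]
    -- derivative of φ at 0, from the linearization hypothesis
    have hφd_sup : HasDerivAt φ bb 0 := by
      have htend : Filter.Tendsto (fun s : ℝ => s • ξ) (nhds 0) (nhds 0) := by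
        have : Continuous fun s : ℝ => s • ξ := continuous_id.smul continuous_const
        simpa using this.tendsto' 0 (0 • ξ) rfl
      have hbig := (hA t₀).comp_tendsto htend
      have h2 : (fun s : ℝ => φ s - s • bb) =O[nhds 0] fun s : ℝ => ‖s • ξ‖ ^ 2 := by
        have : ∀ s : ℝ, g t₀ (NormedSpace.exp (L (s • ξ))) - L (A t₀ *ᵥ (s • ξ))
            = φ s - s • bb := by
          intro s
          simp only [hφdef, _root_.map_smul, mulVec_smul, hbbdef, hmmdef]
        simpa only [Function.comp_def, this] using hbig
      have h3 : (fun s : ℝ => ‖s • ξ‖ ^ 2) =O[nhds 0] fun s : ℝ => s ^ 2 := by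
        apply Asymptotics.IsBigO.of_bound (‖ξ‖ ^ 2)
        filter_upwards with s
        simp [norm_smul, mul_pow, abs_nonneg, sq_abs]
        ring_nf
        exact le_refl _
      have h4 : (fun s : ℝ => s ^ 2) =o[nhds 0] fun s : ℝ => s := by
        simpa using Asymptotics.isLittleO_pow_pow (𝕜 := ℝ) (one_lt_two)
      have h5 : (fun s : ℝ => φ s - s • bb) =o[nhds 0] fun s : ℝ => s :=
        (h2.trans h3).trans_isLittleO h4
      refine hasDerivAt_iff_isLittleO.mpr ?_
      simpa [hφ0] using h5
    have hφd_lin := hasDerivAt_entries_linfty.mpr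
      (fun i j => (hasDerivAt_entries_sup.mp hφd_sup i j))
    -- apply the key lemma
    have hkey := key_linfty hc_lin rfl φ hφ0 hco hφd_lin
    have hη_sup : HasDerivAt η (φ 1) t₀ := by
      refine hasDerivAt_entries_sup.mpr (fun i j => ?_)
      exact hasDerivAt_entries_linfty.mp hkey i j
    have hval : φ 1 = g t₀ (η t₀) := by
      simp only [hφdef, one_smul, hηdef, hmmdef, hξdef]
    rwa [hval] at hη_sup
  have hres := huniq η hηd t
  have hη0 : η 0 = NormedSpace.exp (L ξ0) := by
    simp only [hηdef, hF0, one_mulVec]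
  rw [hη0] at hres
  exact hres.symm
end

section
/- For the 2D car with GPS measurements, the state transition matrix Φ_{t_n}^{t_{n+1}} of the linearized left-invariant error, solving dΦ/dt = A_tΦ with A_t = -[[0,0,0],[0,0,-u_tv_t],[-v_t,u_tv_t,0]], satisfies (Φ_{t_n}^{t_{n+1}})ᵀ Φ_{t_n}^{t_{n+1}} ⪰ exp(-v_max(t_{n+1}-t_n)) I₃ provided |v_t| ≤ v_max for all t. [Here the relevant bound on A_t + A_tᵀ is that its eigenvalues are bounded below by -v_max since the symmetric part involves only the entry ±v_t.] -/
open Matrix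
attribute [local instance] Matrix.normedAddCommGroup Matrix.normedSpace

/-- The linearized error propagation matrix of the 2D car with GPS measurements:
`A_t = -[[0,0,0],[0,0,-u_t v_t],[-v_t, u_t v_t, 0]]`. -/
def Acar16 (u v : ℝ) : Matrix (Fin 3) (Fin 3) ℝ :=
  -(!![0, 0, 0; 0, 0, -(u * v); -v, u * v, 0])

/-- `M ↦ M *ᵥ x` as a linear map. -/
def mvlin16 (x : Fin 3 → ℝ) : Matrix (Fin 3) (Fin 3) ℝ →ₗ[ℝ] (Fin 3 → ℝ) where
  toFun M := M *ᵥ x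
  map_add' M N := Matrix.add_mulVec M N x
  map_smul' c M := Matrix.smul_mulVec c M x

/-- For the 2D car with GPS measurements, the state transition matrix of the
linearized left-invariant error satisfies
`Φᵀ Φ ⪰ exp(-v_max (t_{n+1} - t_n)) I₃` provided `|v_t| ≤ v_max`. -/
theorem stmt16 (u v : ℝ → ℝ) (vmax : ℝ) (hv : ∀ t, |v t| ≤ vmax)
    (tn t1 : ℝ) (htt : tn ≤ t1)
    (Φ : ℝ → Matrix (Fin 3) (Fin 3) ℝ)
    (hΦn : Φ tn = 1)
    (hΦ : ∀ t, HasDerivAt Φ (Acar16 (u t) (v t) * Φ t) t) :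
    ((Φ t1)ᵀ * Φ t1 - Real.exp (-vmax * (t1 - tn)) • (1 : Matrix (Fin 3) (Fin 3) ℝ)).PosSemidef := by
  have hvmax : 0 ≤ vmax := le_trans (abs_nonneg _) (hv tn)
  rw [Matrix.posSemidef_iff_dotProduct_mulVec]
  constructor
  · -- Hermitian
    unfold Matrix.IsHermitian
    rw [Matrix.conjTranspose_eq_transpose_of_trivial]
    simp [Matrix.transpose_sub, Matrix.transpose_mul, Matrix.transpose_smul]
  intro x
  -- y t = Φ t *ᵥ x
  set y : ℝ → (Fin 3 → ℝ) := fun t => Φ t *ᵥ x with hy_def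
  have hy : ∀ t, HasDerivAt y (Acar16 (u t) (v t) *ᵥ y t) t := by
    intro t
    have hL := (mvlin16 x).toContinuousLinearMap.hasFDerivAt (x := Φ t)
    have h2 := hL.comp_hasDerivAt t (hΦ t)
    rw [hy_def]
    simp only [Matrix.mulVec_mulVec]
    exact h2
  -- g t = ∑ (y t i)^2
  set g : ℝ → ℝ := fun t => ∑ i : Fin 3, y t i * y t i with hg_def
  have hg : ∀ t, HasDerivAt g
      (∑ i : Fin 3, ((Acar16 (u t) (v t) *ᵥ y t) i * y t i
        + y t i * (Acar16 (u t) (v t) *ᵥ y t) i)) t := by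
    intro t
    apply HasDerivAt.fun_sum
    intro i _
    have hyi : HasDerivAt (fun s => y s i) ((Acar16 (u t) (v t) *ᵥ y t) i) t :=
      hasDerivAt_pi.1 (hy t) i
    exact hyi.mul hyi
  -- h t = exp (vmax * (t - tn)) * g t is monotone
  set h : ℝ → ℝ := fun t => Real.exp (vmax * (t - tn)) * g t with hh_def
  have hE : ∀ t, HasDerivAt (fun s => Real.exp (vmax * (s - tn)))
      (vmax * Real.exp (vmax * (t - tn))) t := by
    intro t
    have h1 : HasDerivAt (fun s => vmax * (s - tn)) vmax t := by
      simpa using ((hasDerivAt_id t).sub_const tn).const_mul vmax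
    simpa [mul_comm] using h1.exp
  have hh : ∀ t, HasDerivAt h
      (vmax * Real.exp (vmax * (t - tn)) * g t
        + Real.exp (vmax * (t - tn)) * (∑ i : Fin 3, ((Acar16 (u t) (v t) *ᵥ y t) i * y t i
        + y t i * (Acar16 (u t) (v t) *ᵥ y t) i))) t := by
    intro t
    exact (hE t).mul (hg t)
  have hderiv_nonneg : ∀ t, 0 ≤ deriv h t := by
    intro t
    rw [(hh t).deriv]
    have hvt := abs_le.mp (hv t)
    have key : 0 ≤ vmax * g t + (∑ i : Fin 3, ((Acar16 (u t) (v t) *ᵥ y t) i * y t i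
        + y t i * (Acar16 (u t) (v t) *ᵥ y t) i)) := by
      simp [hg_def, Acar16, Matrix.mulVec, dotProduct, Fin.sum_univ_three]
      nlinarith [sq_nonneg (y t 0 + y t 2), sq_nonneg (y t 0 - y t 2), sq_nonneg (y t 1),
        mul_nonneg (by linarith [hvt.2] : (0:ℝ) ≤ vmax - v t) (sq_nonneg (y t 0 + y t 2)),
        mul_nonneg (by linarith [hvt.1] : (0:ℝ) ≤ vmax + v t) (sq_nonneg (y t 0 - y t 2)),
        mul_nonneg (by linarith [hvt.2] : (0:ℝ) ≤ vmax - v t) (sq_nonneg (y t 0 - y t 2)),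
        mul_nonneg (by linarith [hvt.1] : (0:ℝ) ≤ vmax + v t) (sq_nonneg (y t 0 + y t 2))]
    have hEpos : 0 < Real.exp (vmax * (t - tn)) := Real.exp_pos _
    nlinarith [key, hEpos]
  have hmono : Monotone h :=
    monotone_of_deriv_nonneg (fun t => (hh t).differentiableAt) hderiv_nonneg
  have hmono' := hmono htt
  have hhtn : h tn = ∑ i : Fin 3, x i * x i := by
    simp [hh_def, hg_def, hy_def, hΦn, Matrix.one_mulVec]
  -- conclude
  have hEpos : 0 < Real.exp (vmax * (t1 - tn)) := Real.exp_pos _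
  have hexp : Real.exp (-vmax * (t1 - tn)) * Real.exp (vmax * (t1 - tn)) = 1 := by
    rw [← Real.exp_add]; ring_nf; exact Real.exp_zero
  have hgoal : Real.exp (-vmax * (t1 - tn)) * (∑ i : Fin 3, x i * x i) ≤ g t1 := by
    have h2 : (∑ i : Fin 3, x i * x i) ≤ Real.exp (vmax * (t1 - tn)) * g t1 := by
      rw [← hhtn]; exact hmono'
    calc Real.exp (-vmax * (t1 - tn)) * (∑ i : Fin 3, x i * x i)
        ≤ Real.exp (-vmax * (t1 - tn)) * (Real.exp (vmax * (t1 - tn)) * g t1) := by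
          exact mul_le_mul_of_nonneg_left h2 (Real.exp_pos _).le
      _ = g t1 := by rw [← mul_assoc, hexp, one_mul]
  -- rewrite the quadratic form
  have hform : star x ⬝ᵥ (((Φ t1)ᵀ * Φ t1
      - Real.exp (-vmax * (t1 - tn)) • (1 : Matrix (Fin 3) (Fin 3) ℝ)) *ᵥ x)
      = g t1 - Real.exp (-vmax * (t1 - tn)) * (∑ i : Fin 3, x i * x i) := by
    have h1 : ((Φ t1)ᵀ * Φ t1) *ᵥ x = (Φ t1)ᵀ *ᵥ (Φ t1 *ᵥ x) :=
      (Matrix.mulVec_mulVec _ _ _).symm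
    simp only [Matrix.sub_mulVec, dotProduct_sub, h1, Matrix.smul_mulVec,
      Matrix.one_mulVec, dotProduct_smul, star_trivial]
    rw [Matrix.dotProduct_mulVec, Matrix.vecMul_transpose]
    simp [hg_def, hy_def, dotProduct, smul_eq_mul]
  rw [hform]
  linarith [hgoal]
end
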